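/- arXiv:0706.1419 — 2 statements merged into one kernel-verified Lean document; each statement's English description precedes it below -/
import Mathlib

section
/- Let λ ∈ (0,1) and let μ be a symmetric Borel probability measure on ℝ that is ⊞_λ-infinitely divisible with rectangular R-transform C arising from a symmetric positive finite Borel measure G. Then the limit L = lim_{w→−∞} C(w) exists in [−∞, 0]; μ({0}) > 0 if and only if L ∈ (−1, 0]; and in that case μ({0}) = 1 + L. -/
open MeasureTheory Complex Set Filter Topology

noncomputable section

/-- The upper half-plane. -/
def UHP : Set ℂ := {z : ℂ | 0 < z.im}

/-- The nonnegative real axis, viewed as a subset of `ℂ`. -/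
def posAxis : Set ℂ := {z : ℂ | z.im = 0 ∧ 0 ≤ z.re}

/-- `M_μ(z) = ∫ z t² / (1 - z t²) dμ(t)`. -/
def Mt (μ : Measure ℝ) (z : ℂ) : ℂ := ∫ t : ℝ, z * (t : ℂ) ^ 2 / (1 - z * (t : ℂ) ^ 2) ∂μ

/-- `H_μ(z) = z (1 + M_μ(z)) (1 + λ M_μ(z))`. -/
def Ht (l : ℝ) (μ : Measure ℝ) (z : ℂ) : ℂ :=
  z * (1 + Mt μ z) * (1 + (l : ℂ) * Mt μ z)

/-- `T(w) = (λ w + 1)(w + 1)`. -/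
def Tfun (l : ℝ) (w : ℂ) : ℂ := ((l : ℂ) * w + 1) * (w + 1)

/-- The rectangular `R`-transform with Lévy measure `G`:
`C(z) = z ∫ (1+t²)/(1-z t²) dG(t)`. -/
def rectC (G : Measure ℝ) (z : ℂ) : ℂ :=
  z * ∫ t : ℝ, (1 + (t : ℂ) ^ 2) / (1 - z * (t : ℂ) ^ 2) ∂G

/-- `μ` is `⊞_λ`-infinitely divisible with rectangular `R`-transform `C = rectC G`:
`H_μ(x) = x T(C(H_μ(x)))` for `x < 0` close to `0`. -/
def IsRectInfDiv (l : ℝ) (μ G : Measure ℝ) : Prop :=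
  ∃ ε > (0 : ℝ), ∀ x ∈ Set.Ioo (-ε) (0 : ℝ),
    Ht l μ (x : ℂ) = (x : ℂ) * Tfun l (rectC G (Ht l μ (x : ℂ)))

/-- `ρ` is the rectangular free convolution `μ ⊞_λ ν`, where `μ` has rectangular
`R`-transform `rectC G`. -/
def IsRectConv (l : ℝ) (G ν ρ : Measure ℝ) : Prop :=
  ∃ ε > (0 : ℝ), ∀ x ∈ Set.Ioo (-ε) (0 : ℝ),
    Tfun l (Mt ρ (x : ℂ) - rectC G (Ht l ρ (x : ℂ))) ≠ 0 ∧
    Ht l ρ (x : ℂ) =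
      Ht l ν (Ht l ρ (x : ℂ) / Tfun l (Mt ρ (x : ℂ) - rectC G (Ht l ρ (x : ℂ))))

namespace S11

lemma sq_re (t : ℝ) : ((t:ℂ)^2).re = t^2 := by
  rw [← Complex.ofReal_pow]; exact Complex.ofReal_re _
lemma sq_im (t : ℝ) : ((t:ℂ)^2).im = 0 := by
  rw [← Complex.ofReal_pow]; exact Complex.ofReal_im _

lemma denom_re (z : ℂ) (t : ℝ) : (1 - z * (t:ℂ)^2).re = 1 - z.re * t^2 := by
  simp [Complex.sub_re, Complex.mul_re, sq_re, sq_im]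

lemma denom_norm_ge (z : ℂ) (t : ℝ) : 1 - z.re*t^2 ≤ ‖1 - z*(t:ℂ)^2‖ := by
  have h := Complex.re_le_norm (1 - z*(t:ℂ)^2)
  rw [denom_re] at h
  linarith

lemma denom_ne (z : ℂ) (t : ℝ) (hz : z.re ≤ 0) : 1 - z*(t:ℂ)^2 ≠ 0 := by
  intro h
  have h2 : (1 - z*(t:ℂ)^2).re = 0 := by rw [h]; simp
  rw [denom_re] at h2
  nlinarith [sq_nonneg t]

/-- real integrand for M -/
def mIg (x t : ℝ) : ℝ := x * t^2 / (1 - x * t^2)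
/-- real integrand for C -/
def cIg (x t : ℝ) : ℝ := x * (1 + t^2) / (1 - x * t^2)

def mR (μ : Measure ℝ) (x : ℝ) : ℝ := ∫ t, mIg x t ∂μ
def cR (G : Measure ℝ) (x : ℝ) : ℝ := ∫ t, cIg x t ∂G
def hR (l : ℝ) (μ : Measure ℝ) (x : ℝ) : ℝ := x * (1 + mR μ x) * (1 + l * mR μ x)

lemma denom_pos (x t : ℝ) (hx : x ≤ 0) : 0 < 1 - x * t^2 := by nlinarith [sq_nonneg t]

lemma mIg_nonpos (x t : ℝ) (hx : x ≤ 0) : mIg x t ≤ 0 := by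
  have := denom_pos x t hx
  have : x * t^2 ≤ 0 := by nlinarith [sq_nonneg t]
  exact div_nonpos_of_nonpos_of_nonneg this (le_of_lt (denom_pos x t hx))

lemma mIg_add_one (x t : ℝ) (hx : x ≤ 0) : mIg x t + 1 = 1 / (1 - x * t^2) := by
  have h := denom_pos x t hx
  rw [mIg, div_add_one h.ne']; congr 1; ring

lemma mIg_gt' (x t : ℝ) (hx : x ≤ 0) : -1 < mIg x t := by
  have h := denom_pos x t hx
  have := mIg_add_one x t hx
  nlinarith [one_div_pos.mpr h]

lemma mIg_abs_le (x t : ℝ) (hx : x ≤ 0) : |mIg x t| ≤ 1 := by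
  rw [abs_le]
  constructor
  · linarith [mIg_gt' x t hx]
  · linarith [mIg_nonpos x t hx]

lemma cIg_nonpos (x t : ℝ) (hx : x ≤ 0) : cIg x t ≤ 0 := by
  have h := denom_pos x t hx
  have : x * (1 + t^2) ≤ 0 := by nlinarith [sq_nonneg t]
  exact div_nonpos_of_nonpos_of_nonneg this (le_of_lt h)

lemma cIg_abs_le (x t : ℝ) (hx : x ≤ 0) : |cIg x t| ≤ |x| + 1 := by
  have h := denom_pos x t hx
  rw [cIg, abs_div, abs_of_pos h, div_le_iff₀ h]
  have hax : |x| = -x := abs_of_nonpos hx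
  have h1 : |x * (1+t^2)| = (-x) * (1+t^2) := by
    rw [abs_mul, hax, abs_of_pos (by nlinarith [sq_nonneg t] : (0:ℝ) < 1 + t^2)]
  rw [h1, hax]
  nlinarith [sq_nonneg t, sq_nonneg (x*t), mul_nonneg (neg_nonneg.mpr hx) (sq_nonneg t)]

lemma cIg_mono (x y t : ℝ) (hxy : x ≤ y) (hy : y ≤ 0) : cIg x t ≤ cIg y t := by
  have hx := denom_pos x t (hxy.trans hy)
  have hy' := denom_pos y t hy
  rw [cIg, cIg, div_le_div_iff₀ hx hy']
  nlinarith [sq_nonneg t]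

lemma mIg_ge_g (x t : ℝ) (hx : x ≤ 0) : (if t = 0 then (0:ℝ) else -1) ≤ mIg x t := by
  by_cases ht : t = 0
  · simp [ht, mIg]
  · simp [ht]
    exact (mIg_gt' x t hx).le


lemma mIg_cont (x : ℝ) (hx : x ≤ 0) : Continuous (fun t => mIg x t) := by
  apply Continuous.div
  · continuity
  · continuity
  · intro t; exact ne_of_gt (denom_pos x t hx)

lemma cIg_cont (x : ℝ) (hx : x ≤ 0) : Continuous (fun t => cIg x t) := by
  apply Continuous.div
  · continuity
  · continuity
  · intro t; exact ne_of_gt (denom_pos x t hx)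

lemma mIg_integrable (μ : Measure ℝ) [IsFiniteMeasure μ] (x : ℝ) (hx : x ≤ 0) :
    Integrable (fun t => mIg x t) μ := by
  refine Integrable.mono' (integrable_const (1:ℝ)) ((mIg_cont x hx).aestronglyMeasurable) ?_
  exact Filter.Eventually.of_forall fun t => by
    rw [Real.norm_eq_abs]; exact mIg_abs_le x t hx

lemma cIg_integrable (G : Measure ℝ) [IsFiniteMeasure G] (x : ℝ) (hx : x ≤ 0) :
    Integrable (fun t => cIg x t) G := by
  refine Integrable.mono' (integrable_const (|x|+1:ℝ)) ((cIg_cont x hx).aestronglyMeasurable) ?_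
  exact Filter.Eventually.of_forall fun t => by
    rw [Real.norm_eq_abs]; exact cIg_abs_le x t hx

/-- Casting: `Mt` at a negative real point is the real integral. -/
lemma Mt_real (μ : Measure ℝ) (x : ℝ) : Mt μ (x:ℂ) = ((mR μ x : ℝ) : ℂ) := by
  rw [Mt, mR]
  have h : ∀ t : ℝ, (x:ℂ) * (t:ℂ)^2 / (1 - (x:ℂ)*(t:ℂ)^2) = ((mIg x t : ℝ) : ℂ) := by
    intro t; rw [mIg]; push_cast; ring_nf
  simp_rw [h]
  exact integral_ofReal

lemma cR_eq (G : Measure ℝ) [IsFiniteMeasure G] (x : ℝ) (hx : x < 0) :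
    cR G x = x * ∫ t, (1 + t^2) / (1 - x*t^2) ∂G := by
  rw [cR, ← integral_const_mul]
  congr 1; funext t
  rw [cIg, mul_div_assoc]

lemma rectC_real (G : Measure ℝ) [IsFiniteMeasure G] (x : ℝ) (hx : x < 0) :
    rectC G (x:ℂ) = ((cR G x : ℝ) : ℂ) := by
  rw [rectC, cR_eq G x hx]
  push_cast
  congr 1
  have h : ∀ t : ℝ, (1 + (t:ℂ)^2) / (1 - (x:ℂ)*(t:ℂ)^2) = (((1 + t^2)/(1 - x*t^2) : ℝ) : ℂ) := by
    intro t; push_cast; ring_nf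
  simp_rw [h]
  exact integral_ofReal

lemma Ht_real (l : ℝ) (μ : Measure ℝ) (x : ℝ) : Ht l μ (x:ℂ) = ((hR l μ x : ℝ) : ℂ) := by
  rw [Ht, Mt_real, hR]
  push_cast
  ring


lemma one_div_denom_integrable (μ : Measure ℝ) [IsFiniteMeasure μ] (x : ℝ) (hx : x ≤ 0) :
    Integrable (fun t => 1 / (1 - x*t^2)) μ := by
  have h : (fun t => 1 / (1 - x*t^2)) = fun t => mIg x t + 1 := by
    funext t; rw [mIg_add_one x t hx]
  rw [h]
  exact (mIg_integrable μ x hx).add (integrable_const 1)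

lemma mR_nonpos (μ : Measure ℝ) [IsFiniteMeasure μ] (x : ℝ) (hx : x ≤ 0) : mR μ x ≤ 0 :=
  integral_nonpos (fun t => mIg_nonpos x t hx)

lemma mR_gt (μ : Measure ℝ) [IsProbabilityMeasure μ] (x : ℝ) (hx : x ≤ 0) : -1 < mR μ x := by
  have key : 0 < ∫ t, 1 / (1 - x*t^2) ∂μ := by
    rw [integral_pos_iff_support_of_nonneg]
    · have : Function.support (fun t => 1 / (1 - x*t^2)) = Set.univ := by
        ext t
        simp only [Function.mem_support, Set.mem_univ, iff_true]
        exact ne_of_gt (one_div_pos.mpr (denom_pos x t hx))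
      rw [this]
      simp [measure_univ]
    · intro t
      exact le_of_lt (one_div_pos.mpr (denom_pos x t hx))
    · exact one_div_denom_integrable μ x hx
  have h2 : ∫ t, (mIg x t + 1) ∂μ = mR μ x + 1 := by
    rw [integral_add (mIg_integrable μ x hx) (integrable_const 1)]
    simp [mR, measure_univ]
  have h3 : ∫ t, (mIg x t + 1) ∂μ = ∫ t, 1 / (1 - x*t^2) ∂μ := by
    congr 1; funext t; rw [mIg_add_one x t hx]
  have h4 : 0 < mR μ x + 1 := by rw [← h2, h3]; exact key
  linarith

/-- `μ({0}).toReal - 1 ≤ mR μ x`. -/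
lemma mR_ge (μ : Measure ℝ) [IsProbabilityMeasure μ] (x : ℝ) (hx : x ≤ 0) :
    (μ ({0} : Set ℝ)).toReal - 1 ≤ mR μ x := by
  have hint : Integrable (fun t => if t = 0 then (0:ℝ) else -1) μ := by
    refine Integrable.mono' (integrable_const (1:ℝ)) ?_ ?_
    · have : (fun t : ℝ => if t = 0 then (0:ℝ) else -1) =
          fun t => (({0}ᶜ : Set ℝ)).indicator (fun _ => (-1:ℝ)) t := by
        funext t; by_cases ht : t = 0 <;> simp [ht]
      rw [this]
      exact (StronglyMeasurable.indicator stronglyMeasurable_const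
        (MeasurableSet.compl (measurableSet_singleton 0))).aestronglyMeasurable
    · refine Filter.Eventually.of_forall fun t => ?_
      by_cases ht : t = 0 <;> simp [ht]
  have hg : ∫ t, (if t = 0 then (0:ℝ) else -1) ∂μ = (μ ({0} : Set ℝ)).toReal - 1 := by
    have h1 : (fun t : ℝ => if t = 0 then (0:ℝ) else -1) =
        fun t => (({0}ᶜ : Set ℝ)).indicator (fun _ => (-1:ℝ)) t := by
      funext t; by_cases ht : t = 0 <;> simp [ht]
    rw [h1, integral_indicator (MeasurableSet.compl (measurableSet_singleton 0))]
    rw [integral_const]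
    simp only [measureReal_def, Measure.restrict_apply_univ, smul_eq_mul]
    rw [prob_compl_eq_one_sub (measurableSet_singleton 0)]
    have hle : μ ({0} : Set ℝ) ≤ 1 := prob_le_one
    rw [ENNReal.toReal_sub_of_le hle (by simp)]
    simp
  rw [← hg]
  exact integral_mono hint (mIg_integrable μ x hx) (fun t => mIg_ge_g x t hx)

lemma cR_nonpos (G : Measure ℝ) [IsFiniteMeasure G] (x : ℝ) (hx : x ≤ 0) : cR G x ≤ 0 :=
  integral_nonpos (fun t => cIg_nonpos x t hx)

lemma cR_mono (G : Measure ℝ) [IsFiniteMeasure G] (x y : ℝ) (hxy : x ≤ y) (hy : y ≤ 0) :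
    cR G x ≤ cR G y :=
  integral_mono (cIg_integrable G x (hxy.trans hy)) (cIg_integrable G y hy)
    (fun t => cIg_mono x y t hxy hy)

lemma hR_neg (l : ℝ) (hl1 : 0 < l) (hl2 : l < 1) (μ : Measure ℝ) [IsProbabilityMeasure μ]
    (x : ℝ) (hx : x < 0) : hR l μ x < 0 := by
  have h1 := mR_gt μ x hx.le
  have h2 := mR_nonpos μ x hx.le
  have f1 : 0 < 1 + mR μ x := by linarith
  have f2 : 0 < 1 + l * mR μ x := by nlinarith
  rw [hR]
  exact mul_neg_of_neg_of_pos (mul_neg_of_neg_of_pos hx f1) f2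

lemma hR_ge (l : ℝ) (hl1 : 0 < l) (hl2 : l < 1) (μ : Measure ℝ) [IsProbabilityMeasure μ]
    (x : ℝ) (hx : x < 0) : x ≤ hR l μ x := by
  have h1 := mR_gt μ x hx.le
  have h2 := mR_nonpos μ x hx.le
  rw [hR]
  nlinarith [mul_nonneg (neg_nonneg.mpr hx.le) (mul_nonneg hl1.le (neg_nonneg.mpr h2)), sq_nonneg (mR μ x), mul_nonneg hl1.le (sq_nonneg (mR μ x))]


def gfn (t : ℝ) : ℝ := if t = 0 then 0 else -1

lemma gfn_integrable (μ : Measure ℝ) [IsFiniteMeasure μ] : Integrable gfn μ := by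
  refine Integrable.mono' (integrable_const (1:ℝ)) ?_ ?_
  · have : gfn = fun t => (({0}ᶜ : Set ℝ)).indicator (fun _ => (-1:ℝ)) t := by
      funext t; by_cases ht : t = 0 <;> simp [ht, gfn]
    rw [this]
    exact (StronglyMeasurable.indicator stronglyMeasurable_const
      (MeasurableSet.compl (measurableSet_singleton 0))).aestronglyMeasurable
  · refine Filter.Eventually.of_forall fun t => ?_
    by_cases ht : t = 0 <;> simp [ht, gfn]

lemma gfn_integral (μ : Measure ℝ) [IsProbabilityMeasure μ] :
    ∫ t, gfn t ∂μ = (μ ({0} : Set ℝ)).toReal - 1 := by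
  have h1 : gfn = fun t => (({0}ᶜ : Set ℝ)).indicator (fun _ => (-1:ℝ)) t := by
    funext t; by_cases ht : t = 0 <;> simp [ht, gfn]
  rw [h1, integral_indicator (MeasurableSet.compl (measurableSet_singleton 0))]
  rw [integral_const]
  simp only [measureReal_def, Measure.restrict_apply_univ, smul_eq_mul]
  rw [prob_compl_eq_one_sub (measurableSet_singleton 0)]
  have hle : μ ({0} : Set ℝ) ≤ 1 := prob_le_one
  rw [ENNReal.toReal_sub_of_le hle (by simp)]
  simp

/-- `mR μ x → μ({0}) - 1` as `x → -∞`. -/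
lemma mR_tendsto (μ : Measure ℝ) [IsProbabilityMeasure μ] :
    Tendsto (mR μ) atBot (𝓝 ((μ ({0} : Set ℝ)).toReal - 1)) := by
  rw [← gfn_integral μ]
  apply tendsto_integral_filter_of_dominated_convergence (fun _ => (1:ℝ))
  · filter_upwards [eventually_le_atBot (0:ℝ)] with x hx
    exact ((mIg_cont x hx).aestronglyMeasurable)
  · filter_upwards [eventually_le_atBot (0:ℝ)] with x hx
    exact Filter.Eventually.of_forall fun t => by
      rw [Real.norm_eq_abs]; exact mIg_abs_le x t hx
  · exact integrable_const 1
  · refine Filter.Eventually.of_forall fun t => ?_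
    by_cases ht : t = 0
    · subst ht
      have : ∀ x : ℝ, mIg x 0 = 0 := by intro x; simp [mIg]
      simp only [this, gfn, if_pos rfl]
      exact tendsto_const_nhds
    · have ht2 : 0 < t^2 := by positivity
      have h1 : Tendsto (fun x : ℝ => x * t^2) atBot atBot :=
        Tendsto.atBot_mul_const ht2 tendsto_id
      have h2 : Tendsto (fun x : ℝ => 1 - x * t^2) atBot atTop := by
        have hneg : Tendsto (fun x : ℝ => -(x * t^2)) atBot atTop :=
          tendsto_neg_atBot_atTop.comp h1
        have heq : (fun x : ℝ => 1 - x * t^2) = (fun x : ℝ => 1 + -(x * t^2)) := by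
          funext x; ring
        rw [heq]
        exact tendsto_atTop_add_const_left _ _ hneg
      have h3 : Tendsto (fun x : ℝ => (1 - x * t^2)⁻¹) atBot (𝓝 0) :=
        tendsto_inv_atTop_zero.comp h2
      have h4 : Tendsto (fun x : ℝ => -1 + (1 - x * t^2)⁻¹) atBot (𝓝 (gfn t)) := by
        have : gfn t = -1 + 0 := by simp [gfn, ht]
        rw [this]
        exact tendsto_const_nhds.add h3
      apply h4.congr'
      filter_upwards [eventually_le_atBot (0:ℝ)] with x hx
      have hd := denom_pos x t hx
      rw [mIg]
      field_simp
      ring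

lemma minfn_integrable (G : Measure ℝ) [IsFiniteMeasure G] (d : ℝ) (hd : 0 ≤ d) :
    Integrable (fun t => min (d * t^2) 1) G := by
  refine Integrable.mono' (integrable_const (1 : ℝ)) ?_ ?_
  · exact ((continuous_const.mul (continuous_pow 2)).min continuous_const).aestronglyMeasurable
  · refine Filter.Eventually.of_forall fun t => ?_
    rw [Real.norm_eq_abs, abs_le]
    have hpos : (0:ℝ) ≤ d * t^2 := by positivity
    exact ⟨by nlinarith [le_min hpos zero_le_one], min_le_right _ _⟩

lemma beta_tendsto (G : Measure ℝ) [IsFiniteMeasure G] :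
    Tendsto (fun n : ℕ => ∫ t, min ((1/(n+1:ℝ)) * t^2) 1 ∂G) atTop (𝓝 0) := by
  have h0 : (0:ℝ) = ∫ t : ℝ, (0:ℝ) ∂G := by simp
  rw [h0]
  apply tendsto_integral_filter_of_dominated_convergence (fun _ => (1:ℝ))
  · exact Filter.Eventually.of_forall fun n =>
      ((continuous_const.mul (continuous_pow 2)).min continuous_const).aestronglyMeasurable
  · refine Filter.Eventually.of_forall fun n => Filter.Eventually.of_forall fun t => ?_
    rw [Real.norm_eq_abs, abs_le]
    have hpos : (0:ℝ) ≤ (1/(n+1:ℝ)) * t^2 := by positivity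
    constructor
    · nlinarith [le_min hpos zero_le_one]
    · exact min_le_right _ _
  · exact integrable_const 1
  · refine Filter.Eventually.of_forall fun t => ?_
    have h1 : Tendsto (fun n : ℕ => (1/(n+1:ℝ)) * t^2) atTop (𝓝 0) := by
      have := tendsto_one_div_add_atTop_nhds_zero_nat (𝕜 := ℝ)
      have h2 := this.mul_const (t^2)
      simpa using h2
    have h3 := h1.min (tendsto_const_nhds (x := (1:ℝ)))
    simpa using h3

lemma cIg_bound_small (w t d : ℝ) (hw : -d ≤ w) (hw0 : w < 0) :
    |cIg w t| ≤ -w + min (d * t^2) 1 := by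
  have hq := denom_pos w t hw0.le
  have ha : 0 < -w := by linarith
  have h1 : |cIg w t| = (-w) * (1 + t^2) / (1 - w * t^2) := by
    rw [cIg, abs_div, abs_of_pos hq, abs_mul]
    rw [abs_of_nonpos hw0.le, abs_of_pos (by nlinarith [sq_nonneg t] : (0:ℝ) < 1 + t^2)]
  rw [h1, div_le_iff₀ hq]
  have hmin : min ((-w) * t^2) 1 ≤ min (d * t^2) 1 :=
    min_le_min (by nlinarith [sq_nonneg t]) le_rfl
  have key : (-w) * (1 + t^2) ≤ (-w + min ((-w) * t^2) 1) * (1 - w * t^2) := by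
    rcases le_total ((-w) * t^2) 1 with h | h
    · rw [min_eq_left h]; nlinarith [sq_nonneg t, sq_nonneg (w*t)]
    · rw [min_eq_right h]; nlinarith [sq_nonneg t, sq_nonneg (w*t)]
  have : (-w + min ((-w) * t^2) 1) * (1 - w * t^2) ≤ (-w + min (d * t^2) 1) * (1 - w * t^2) := by
    apply mul_le_mul_of_nonneg_right _ hq.le
    linarith
  linarith

lemma cR_small (G : Measure ℝ) [IsFiniteMeasure G] :
    ∃ δ > (0:ℝ), ∀ w : ℝ, -δ < w → w < 0 → |cR G w| < 1 := by
  obtain ⟨n, hn⟩ := ((beta_tendsto G).eventually_lt_const (by norm_num : (0:ℝ) < 1/2)).exists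
  set d : ℝ := 1/(n+1:ℝ) with hd
  have hdpos : 0 < d := by positivity
  set Gt : ℝ := (G Set.univ).toReal with hGt
  have hGt0 : 0 ≤ Gt := ENNReal.toReal_nonneg
  refine ⟨min d (1/(2*(Gt+1))), lt_min hdpos (by positivity), fun w hw1 hw2 => ?_⟩
  have hwd : -d ≤ w := by
    have := min_le_left d (1/(2*(Gt+1)))
    linarith [hw1]
  have hw3 : -(1/(2*(Gt+1))) ≤ w := by
    have := min_le_right d (1/(2*(Gt+1)))
    linarith [hw1]
  have hint : Integrable (fun t => -w + min (d * t^2) 1) G :=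
    (integrable_const (-w)).add (minfn_integrable G d hdpos.le)
  have h1 : |cR G w| ≤ ∫ t, |cIg w t| ∂G := by
    rw [cR]
    have := norm_integral_le_integral_norm (fun t => cIg w t) (μ := G)
    simpa [Real.norm_eq_abs] using this
  have h2 : ∫ t, |cIg w t| ∂G ≤ ∫ t, (-w + min (d * t^2) 1) ∂G := by
    apply integral_mono ((cIg_integrable G w hw2.le).abs) hint
    intro t
    exact cIg_bound_small w t d hwd hw2
  have h3 : ∫ t, (-w + min (d * t^2) 1) ∂G
      = (-w) * Gt + ∫ t, min (d * t^2) 1 ∂G := by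
    rw [integral_add (integrable_const (-w)) (minfn_integrable G d hdpos.le), integral_const]
    simp [hGt, smul_eq_mul, mul_comm, measureReal_def]
  have h4 : (-w) * Gt < 1/2 := by
    have hww : -w ≤ 1/(2*(Gt+1)) := by linarith
    have : (-w) * Gt ≤ (1/(2*(Gt+1))) * Gt := by nlinarith
    have h5 : (1/(2*(Gt+1))) * Gt < 1/2 := by
      rw [div_mul_eq_mul_div, one_mul, div_lt_iff₀ (by positivity)]
      nlinarith
    linarith
  calc |cR G w| ≤ ∫ t, (-w + min (d * t^2) 1) ∂G := h1.trans h2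
    _ = (-w) * Gt + ∫ t, min (d * t^2) 1 ∂G := h3
    _ < 1/2 + 1/2 := by
        apply add_lt_add h4
        exact hn
    _ = 1 := by norm_num


def U : Set ℂ := {z : ℂ | z.re < 0}

lemma U_open : IsOpen U := isOpen_lt Complex.continuous_re continuous_const

lemma sq_norm (t : ℝ) : ‖(t:ℂ)^2‖ = t^2 := by
  rw [norm_pow, Complex.norm_real, Real.norm_eq_abs]; exact sq_abs t

lemma denom_norm_ge' (z : ℂ) (t a : ℝ) (ha : 0 < a) (hz : z.re ≤ -a) :
    1 + a * t^2 ≤ ‖1 - z*(t:ℂ)^2‖ := by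
  have h := denom_norm_ge z t
  nlinarith [sq_nonneg t]

lemma denom_norm_pos (z : ℂ) (t a : ℝ) (ha : 0 < a) (hz : z.re ≤ -a) :
    0 < ‖1 - z*(t:ℂ)^2‖ := by
  have := denom_norm_ge' z t a ha hz
  nlinarith [sq_nonneg t]

lemma normF_le (z : ℂ) (t a : ℝ) (ha : 0 < a) (hz : z.re ≤ -a) :
    ‖z * (t:ℂ)^2 / (1 - z*(t:ℂ)^2)‖ ≤ ‖z‖ / a := by
  have hden := denom_norm_ge' z t a ha hz
  have hdpos := denom_norm_pos z t a ha hz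
  rw [norm_div, div_le_iff₀ hdpos, norm_mul, sq_norm]
  have h1 : ‖z‖ / a * (1 + a*t^2) ≤ ‖z‖ / a * ‖1 - z*(t:ℂ)^2‖ :=
    mul_le_mul_of_nonneg_left hden (by positivity)
  have h2 : ‖z‖ * t^2 ≤ ‖z‖/a * (1 + a*t^2) := by
    rw [div_mul_eq_mul_div, le_div_iff₀ ha]
    nlinarith [norm_nonneg z, sq_nonneg t]
  linarith

lemma normF'_le (z : ℂ) (t a : ℝ) (ha : 0 < a) (hz : z.re ≤ -a) :
    ‖(t:ℂ)^2 / (1 - z*(t:ℂ)^2)^2‖ ≤ 1 / a := by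
  have hden := denom_norm_ge' z t a ha hz
  have hdpos := denom_norm_pos z t a ha hz
  rw [norm_div, sq_norm, norm_pow, div_le_iff₀ (pow_pos hdpos 2)]
  have h2 : (1 + a*t^2)^2 ≤ ‖1 - z*(t:ℂ)^2‖^2 := by
    apply pow_le_pow_left₀ (by positivity) hden
  have haa : 1/a * a = 1 := by field_simp
  nlinarith [sq_nonneg t, sq_nonneg (a*t^2), mul_nonneg ha.le (sq_nonneg (t^2)),
    mul_le_mul_of_nonneg_left h2 (le_of_lt (one_div_pos.mpr ha))]

lemma one_add_sq_norm (t : ℝ) : ‖1 + (t:ℂ)^2‖ = 1 + t^2 := by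
  have : (1 + (t:ℂ)^2) = (((1 + t^2 : ℝ)):ℂ) := by push_cast; ring
  rw [this, Complex.norm_real, Real.norm_eq_abs, abs_of_pos (by nlinarith [sq_nonneg t])]

lemma normFc_le (z : ℂ) (t a : ℝ) (ha : 0 < a) (hz : z.re ≤ -a) :
    ‖(1 + (t:ℂ)^2) / (1 - z*(t:ℂ)^2)‖ ≤ 1 + 1/a := by
  have hden := denom_norm_ge' z t a ha hz
  have hdpos := denom_norm_pos z t a ha hz
  rw [norm_div, div_le_iff₀ hdpos, one_add_sq_norm]
  have h1 : (1 + 1/a) * (1 + a*t^2) ≤ (1 + 1/a) * ‖1 - z*(t:ℂ)^2‖ :=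
    mul_le_mul_of_nonneg_left hden (by positivity)
  have h2 : 1 + t^2 ≤ (1 + 1/a) * (1 + a*t^2) := by
    have haa : 1/a * a = 1 := by field_simp
    nlinarith [sq_nonneg t, div_pos one_pos ha]
  linarith

lemma normFc'_le (z : ℂ) (t a : ℝ) (ha : 0 < a) (hz : z.re ≤ -a) :
    ‖(1 + (t:ℂ)^2) * (t:ℂ)^2 / (1 - z*(t:ℂ)^2)^2‖ ≤ (1 + 1/a) * (1/a) := by
  have hden := denom_norm_ge' z t a ha hz
  have hdpos := denom_norm_pos z t a ha hz
  rw [norm_div, norm_mul, one_add_sq_norm, sq_norm, norm_pow, div_le_iff₀ (pow_pos hdpos 2)]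
  have h2 : (1 + a*t^2)^2 ≤ ‖1 - z*(t:ℂ)^2‖^2 := by
    apply pow_le_pow_left₀ (by positivity) hden
  have haa : 1/a * a = 1 := by field_simp
  have h3 : (1 + t^2) * t^2 ≤ (1 + 1/a) * (1/a) * (1 + a*t^2)^2 := by
    have hexp : (1 + 1/a) * (1/a) * (1 + a*t^2)^2 = ((a+1) * (1+a*t^2)^2)/(a^2) := by
      field_simp
    rw [hexp, le_div_iff₀ (by positivity)]
    nlinarith [sq_nonneg t, sq_nonneg (t^2), mul_nonneg ha.le (sq_nonneg t),
      mul_nonneg (mul_nonneg ha.le ha.le) (sq_nonneg t),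
      mul_nonneg (mul_nonneg (mul_nonneg ha.le ha.le) ha.le) (sq_nonneg (t^2))]
  have h4 : (1 + 1/a) * (1/a) * (1 + a*t^2)^2 ≤ (1 + 1/a) * (1/a) * ‖1 - z*(t:ℂ)^2‖^2 :=
    mul_le_mul_of_nonneg_left h2 (by positivity)
  linarith

lemma hasDeriv_m (t : ℝ) (z : ℂ) (hz : 1 - z*(t:ℂ)^2 ≠ 0) :
    HasDerivAt (fun w : ℂ => w * (t:ℂ)^2 / (1 - w * (t:ℂ)^2))
      ((t:ℂ)^2 / (1 - z*(t:ℂ)^2)^2) z := by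
  have h1 : HasDerivAt (fun w : ℂ => w * (t:ℂ)^2) ((t:ℂ)^2) z := by
    simpa using (hasDerivAt_id z).mul_const ((t:ℂ)^2)
  have h2 : HasDerivAt (fun w : ℂ => 1 - w * (t:ℂ)^2) (-(t:ℂ)^2) z := by
    have := (hasDerivAt_const z (1:ℂ)).sub h1
    simp only [zero_sub] at this
    exact this
  have h3 := h1.div h2 hz
  exact h3.congr_deriv (by ring)

lemma hasDeriv_c (t : ℝ) (z : ℂ) (hz : 1 - z*(t:ℂ)^2 ≠ 0) :
    HasDerivAt (fun w : ℂ => (1 + (t:ℂ)^2) / (1 - w * (t:ℂ)^2))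
      ((1 + (t:ℂ)^2) * (t:ℂ)^2 / (1 - z*(t:ℂ)^2)^2) z := by
  have h1 : HasDerivAt (fun w : ℂ => w * (t:ℂ)^2) ((t:ℂ)^2) z := by
    simpa using (hasDerivAt_id z).mul_const ((t:ℂ)^2)
  have h2 : HasDerivAt (fun w : ℂ => 1 - w * (t:ℂ)^2) (-(t:ℂ)^2) z := by
    have := (hasDerivAt_const z (1:ℂ)).sub h1
    simp only [zero_sub] at this
    exact this
  have h3 := (hasDerivAt_const z (1 + (t:ℂ)^2)).div h2 hz
  exact h3.congr_deriv (by ring)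

lemma measF (μ : Measure ℝ) (z : ℂ) :
    AEStronglyMeasurable (fun t : ℝ => z*(t:ℂ)^2/(1-z*(t:ℂ)^2)) μ := by
  apply Measurable.aestronglyMeasurable
  have hm : Measurable (fun t : ℝ => (t:ℂ)^2) := (Complex.measurable_ofReal).pow_const 2
  exact ((hm.const_mul z)).div ((hm.const_mul z).const_sub 1)

lemma measF' (μ : Measure ℝ) (z : ℂ) :
    AEStronglyMeasurable (fun t : ℝ => (t:ℂ)^2/(1-z*(t:ℂ)^2)^2) μ := by
  apply Measurable.aestronglyMeasurable
  have hm : Measurable (fun t : ℝ => (t:ℂ)^2) := (Complex.measurable_ofReal).pow_const 2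
  exact hm.div (((hm.const_mul z).const_sub 1).pow_const 2)

lemma measFc (G : Measure ℝ) (z : ℂ) :
    AEStronglyMeasurable (fun t : ℝ => (1+(t:ℂ)^2)/(1-z*(t:ℂ)^2)) G := by
  apply Measurable.aestronglyMeasurable
  have hm : Measurable (fun t : ℝ => (t:ℂ)^2) := (Complex.measurable_ofReal).pow_const 2
  exact (hm.const_add 1).div ((hm.const_mul z).const_sub 1)

lemma measFc' (G : Measure ℝ) (z : ℂ) :
    AEStronglyMeasurable (fun t : ℝ => (1+(t:ℂ)^2)*(t:ℂ)^2/(1-z*(t:ℂ)^2)^2) G := by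
  apply Measurable.aestronglyMeasurable
  have hm : Measurable (fun t : ℝ => (t:ℂ)^2) := (Complex.measurable_ofReal).pow_const 2
  exact ((hm.const_add 1).mul hm).div (((hm.const_mul z).const_sub 1).pow_const 2)

lemma ball_re (z₀ : ℂ) (a : ℝ) (hz₀ : z₀.re = -(2*a)) (ha : 0 < a) :
    ∀ z ∈ Metric.ball z₀ a, z.re ≤ -a := by
  intro z hz
  rw [Metric.mem_ball, dist_eq_norm] at hz
  have h1 : |(z - z₀).re| ≤ ‖z - z₀‖ := Complex.abs_re_le_norm _
  have h2 := (abs_le.mp (h1.trans hz.le)).2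
  rw [Complex.sub_re] at h2
  linarith


/-- `Mt` is differentiable on the left half plane. -/
lemma Mt_diffOn (μ : Measure ℝ) [IsFiniteMeasure μ] : DifferentiableOn ℂ (Mt μ) U := by
  intro z₀ hz₀
  apply DifferentiableAt.differentiableWithinAt
  have hz₀' : z₀.re < 0 := hz₀
  set a : ℝ := -z₀.re/2 with ha
  have haz : 0 < a := by rw [ha]; linarith
  have hzre : z₀.re = -(2*a) := by rw [ha]; ring
  have hball := ball_re z₀ a hzre haz
  have key := hasDerivAt_integral_of_dominated_loc_of_deriv_le (μ := μ) (x₀ := z₀)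
      (s := Metric.ball z₀ a) (bound := fun _ => 1/a)
      (F := fun z (t : ℝ) => z*(t:ℂ)^2/(1-z*(t:ℂ)^2))
      (F' := fun z (t : ℝ) => (t:ℂ)^2/(1-z*(t:ℂ)^2)^2) (Metric.ball_mem_nhds z₀ haz)
      (Filter.Eventually.of_forall fun z => measF μ z)
      ?_ (measF' μ z₀) ?_ (integrable_const _) ?_
  · exact HasDerivAt.differentiableAt key.2
  · -- integrability of F z₀
    refine Integrable.mono' (integrable_const (‖z₀‖/a : ℝ)) (measF μ z₀) ?_
    refine Filter.Eventually.of_forall fun t => ?_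
    exact normF_le z₀ t a haz (by linarith [hzre])
  · -- bound
    refine Filter.Eventually.of_forall fun t => fun z hz => ?_
    exact normF'_le z t a haz (hball z hz)
  · -- differentiability
    refine Filter.Eventually.of_forall fun t => fun z hz => ?_
    have hzre2 : z.re ≤ -a := hball z hz
    exact hasDeriv_m t z (denom_ne z t (by linarith))

def NG (G : Measure ℝ) (z : ℂ) : ℂ := ∫ t : ℝ, (1 + (t:ℂ)^2)/(1-z*(t:ℂ)^2) ∂G

lemma NG_diffOn (G : Measure ℝ) [IsFiniteMeasure G] : DifferentiableOn ℂ (NG G) U := by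
  intro z₀ hz₀
  apply DifferentiableAt.differentiableWithinAt
  have hz₀' : z₀.re < 0 := hz₀
  set a : ℝ := -z₀.re/2 with ha
  have haz : 0 < a := by rw [ha]; linarith
  have hzre : z₀.re = -(2*a) := by rw [ha]; ring
  have hball := ball_re z₀ a hzre haz
  have key := hasDerivAt_integral_of_dominated_loc_of_deriv_le (μ := G) (x₀ := z₀)
      (s := Metric.ball z₀ a) (bound := fun _ => (1+1/a)*(1/a))
      (F := fun z (t : ℝ) => (1+(t:ℂ)^2)/(1-z*(t:ℂ)^2))
      (F' := fun z (t : ℝ) => (1+(t:ℂ)^2)*(t:ℂ)^2/(1-z*(t:ℂ)^2)^2) (Metric.ball_mem_nhds z₀ haz)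
      (Filter.Eventually.of_forall fun z => measFc G z)
      ?_ (measFc' G z₀) ?_ (integrable_const _) ?_
  · exact HasDerivAt.differentiableAt key.2
  · refine Integrable.mono' (integrable_const (1+1/a : ℝ)) (measFc G z₀) ?_
    refine Filter.Eventually.of_forall fun t => ?_
    exact normFc_le z₀ t a haz (by linarith [hzre])
  · refine Filter.Eventually.of_forall fun t => fun z hz => ?_
    exact normFc'_le z t a haz (hball z hz)
  · refine Filter.Eventually.of_forall fun t => fun z hz => ?_
    have hzre2 : z.re ≤ -a := hball z hz
    exact hasDeriv_c t z (denom_ne z t (by linarith))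

lemma Mt_analytic (μ : Measure ℝ) [IsFiniteMeasure μ] : AnalyticOnNhd ℂ (Mt μ) U :=
  (Mt_diffOn μ).analyticOnNhd U_open

lemma rectC_analytic (G : Measure ℝ) [IsFiniteMeasure G] : AnalyticOnNhd ℂ (rectC G) U := by
  have h1 : AnalyticOnNhd ℂ (NG G) U := (NG_diffOn G).analyticOnNhd U_open
  have h2 : AnalyticOnNhd ℂ (fun z : ℂ => z) U := fun z _ => analyticAt_id
  have h3 := h2.mul h1
  exact h3

lemma Ht_analytic (l : ℝ) (μ : Measure ℝ) [IsFiniteMeasure μ] :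
    AnalyticOnNhd ℂ (Ht l μ) U := by
  have h1 := Mt_analytic μ
  have h2 : AnalyticOnNhd ℂ (fun z : ℂ => z) U := fun z _ => analyticAt_id
  have hc1 : AnalyticOnNhd ℂ (fun _ : ℂ => (1:ℂ)) U := fun z _ => analyticAt_const
  have hcl : AnalyticOnNhd ℂ (fun _ : ℂ => (l:ℂ)) U := fun z _ => analyticAt_const
  exact ((h2.mul (hc1.add h1)).mul (hc1.add (hcl.mul h1)))

lemma ofReal_mem_U (x : ℝ) (hx : x < 0) : ((x:ℂ)) ∈ U := by
  show (x:ℂ).re < 0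
  simpa using hx

/-- `x ↦ Mt μ x` is real analytic on `(-∞,0)`. -/
lemma MtR_analytic (μ : Measure ℝ) [IsFiniteMeasure μ] :
    AnalyticOnNhd ℝ (fun x : ℝ => Mt μ (x:ℂ)) (Iio 0) := by
  intro x hx
  have h1 : AnalyticAt ℂ (Mt μ) ((x:ℂ)) := Mt_analytic μ _ (ofReal_mem_U x hx)
  have h2 : AnalyticAt ℝ (fun x : ℝ => (x:ℂ)) x := Complex.ofRealCLM.analyticAt x
  exact (h1.restrictScalars (𝕜 := ℝ)).comp h2

lemma HtR_analytic (l : ℝ) (μ : Measure ℝ) [IsFiniteMeasure μ] :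
    AnalyticOnNhd ℝ (fun x : ℝ => Ht l μ (x:ℂ)) (Iio 0) := by
  intro x hx
  have h1 : AnalyticAt ℂ (Ht l μ) ((x:ℂ)) := Ht_analytic l μ _ (ofReal_mem_U x hx)
  have h2 : AnalyticAt ℝ (fun x : ℝ => (x:ℂ)) x := Complex.ofRealCLM.analyticAt x
  exact (h1.restrictScalars (𝕜 := ℝ)).comp h2

lemma CH_analytic (l : ℝ) (hl1 : 0 < l) (hl2 : l < 1) (μ G : Measure ℝ)
    [IsProbabilityMeasure μ] [IsFiniteMeasure G] :
    AnalyticOnNhd ℝ (fun x : ℝ => rectC G (Ht l μ (x:ℂ))) (Iio 0) := by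
  intro x hx
  have hx' : x < 0 := hx
  have hmem : Ht l μ (x:ℂ) ∈ U := by
    rw [Ht_real]
    exact ofReal_mem_U _ (hR_neg l hl1 hl2 μ x hx')
  have h1 : AnalyticAt ℂ (rectC G) (Ht l μ (x:ℂ)) := rectC_analytic G _ hmem
  have h2 : AnalyticAt ℝ (fun x : ℝ => Ht l μ (x:ℂ)) x := HtR_analytic l μ x hx
  exact AnalyticAt.comp (f := fun x : ℝ => Ht l μ (x:ℂ)) (h1.restrictScalars (𝕜 := ℝ)) h2


lemma Tfun_real (l r : ℝ) : Tfun l ((r:ℝ):ℂ) = (((l*r+1)*(r+1) : ℝ) : ℂ) := by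
  rw [Tfun]; push_cast; ring

/-- central identity: `C(H(x)) = M(x)` for all `x < 0`. -/
lemma key_eq (l : ℝ) (hl1 : 0 < l) (hl2 : l < 1) (μ G : Measure ℝ)
    [IsProbabilityMeasure μ] [IsFiniteMeasure G]
    (hID : ∃ ε > (0 : ℝ), ∀ x ∈ Set.Ioo (-ε) (0 : ℝ),
      Ht l μ (x : ℂ) = (x : ℂ) * Tfun l (rectC G (Ht l μ (x : ℂ)))) :
    ∀ x : ℝ, x < 0 → cR G (hR l μ x) = mR μ x := by
  obtain ⟨ε, hε, heq⟩ := hID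
  obtain ⟨δ, hδ, hsmall⟩ := cR_small G
  set ε₁ : ℝ := min ε δ with hε₁def
  have hε₁ : 0 < ε₁ := lt_min hε hδ
  -- local identity on (-ε₁, 0)
  have hloc : ∀ x ∈ Set.Ioo (-ε₁) (0:ℝ), cR G (hR l μ x) = mR μ x := by
    rintro x ⟨hx1, hx2⟩
    have hxe : x ∈ Set.Ioo (-ε) (0:ℝ) :=
      ⟨by have := min_le_left ε δ; simp only [hε₁def] at hx1; linarith, hx2⟩
    have hH := heq x hxe
    have hRneg := hR_neg l hl1 hl2 μ x hx2
    have hRge := hR_ge l hl1 hl2 μ x hx2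
    -- convert to reals
    rw [Ht_real, rectC_real G _ hRneg, Tfun_real] at hH
    set a : ℝ := cR G (hR l μ x) with hadef
    set m : ℝ := mR μ x with hmdef
    have hHr : hR l μ x = x * ((l*a+1)*(a+1)) := by
      have := hH
      rw [show ((x:ℝ):ℂ) * (((l*a+1)*(a+1) : ℝ) : ℂ) = (((x * ((l*a+1)*(a+1))) : ℝ) : ℂ) by
        push_cast; ring] at this
      exact_mod_cast this
    have habs : |a| < 1 := by
      apply hsmall
      · have : -δ ≤ -ε₁ := by
          have := min_le_right ε δ; simp only [hε₁def]; linarith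
        linarith
      · exact hRneg
    have hm1 : -1 < m := mR_gt μ x hx2.le
    have hm0 : m ≤ 0 := mR_nonpos μ x hx2.le
    have hx0 : x ≠ 0 := ne_of_lt hx2
    -- hR = x * (1+m)(1+lm)
    have hHr2 : hR l μ x = x * ((1 + m) * (1 + l*m)) := by rw [hR]; ring
    have hTT : (l*a+1)*(a+1) = (1+m)*(1+l*m) := by
      have := hHr.symm.trans hHr2
      exact mul_left_cancel₀ hx0 this
    have hfac : (a - m) * (l*(a+m) + l + 1) = 0 := by linear_combination hTT
    have hpos : 0 < l*(a+m) + l + 1 := by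
      have ha1 : -1 < a := by have := abs_lt.mp habs; linarith [this.1]
      nlinarith
    have := mul_eq_zero.mp hfac
    rcases this with h | h
    · linarith [sub_eq_zero.mp h]
    · linarith
  -- analytic functions
  have hf : AnalyticOnNhd ℝ (fun x : ℝ => rectC G (Ht l μ (x:ℂ))) (Iio 0) :=
    CH_analytic l hl1 hl2 μ G
  have hg : AnalyticOnNhd ℝ (fun x : ℝ => Mt μ (x:ℂ)) (Iio 0) := MtR_analytic μ
  set x₀ : ℝ := -ε₁/2 with hx₀def
  have hx₀ : x₀ ∈ Iio (0:ℝ) := by simp only [hx₀def, Set.mem_Iio]; linarith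
  have hnhds : Set.Ioo (-ε₁) (0:ℝ) ∈ 𝓝 x₀ := by
    apply IsOpen.mem_nhds isOpen_Ioo
    constructor <;> (simp only [hx₀def]; linarith)
  have hev : (fun x : ℝ => rectC G (Ht l μ (x:ℂ))) =ᶠ[𝓝 x₀] (fun x : ℝ => Mt μ (x:ℂ)) := by
    filter_upwards [hnhds] with x hx
    have hx2 : x < 0 := hx.2
    rw [Ht_real, rectC_real G _ (hR_neg l hl1 hl2 μ x hx2), Mt_real, hloc x hx]
  have hEq := hf.eqOn_of_preconnected_of_eventuallyEq hg isPreconnected_Iio hx₀ hev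
  intro x hx
  have := hEq (Set.mem_Iio.mpr hx)
  simp only at this
  rw [Ht_real, rectC_real G _ (hR_neg l hl1 hl2 μ x hx), Mt_real] at this
  exact_mod_cast this


end S11

/-- If `μ` is `⊞_λ`-infinitely divisible with rectangular `R`-transform
`C = rectC G`, then `L = lim_{w→-∞} C(w)` exists in `[-∞,0]`, `μ({0}) > 0` iff
`L ∈ (-1,0]`, and in that case `μ({0}) = 1 + L`. -/
theorem stmt11 (l : ℝ) (hl : l ∈ Set.Ioo (0 : ℝ) 1)
    (μ : Measure ℝ) [IsProbabilityMeasure μ]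
    (hμsym : Measure.map (fun t : ℝ => -t) μ = μ)
    (G : Measure ℝ) [IsFiniteMeasure G]
    (hGsym : Measure.map (fun t : ℝ => -t) G = G)
    (hID : IsRectInfDiv l μ G) :
    ∃ L : EReal,
      Tendsto (fun x : ℝ => ((rectC G (x : ℂ)).re : EReal)) atBot (nhds L) ∧
      L ≤ 0 ∧
      (0 < μ ({0} : Set ℝ) ↔ (-1 : EReal) < L) ∧
      ((-1 : EReal) < L → ∃ Lr : ℝ, L = (Lr : EReal) ∧ (μ ({0} : Set ℝ)).toReal = 1 + Lr) := by
  have hID' : ∃ ε > (0 : ℝ), ∀ x ∈ Set.Ioo (-ε) (0 : ℝ),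
      Ht l μ (x : ℂ) = (x : ℂ) * Tfun l (rectC G (Ht l μ (x : ℂ))) := hID

  obtain ⟨hl1, hl2⟩ := hl
  have hkey := S11.key_eq l hl1 hl2 μ G hID'
  set μ0 : ℝ := (μ ({0} : Set ℝ)).toReal with hμ0
  set f : ℝ → EReal := fun x => ((S11.cR G (min x (-1)) : ℝ) : EReal) with hf
  have hmono : Monotone f := by
    intro x y hxy
    simp only [hf]
    rw [EReal.coe_le_coe_iff]
    exact S11.cR_mono G _ _ (min_le_min hxy le_rfl)
      ((min_le_right y (-1)).trans (by norm_num))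
  set L : EReal := ⨅ x, f x with hL
  have hTf : Tendsto f atBot (𝓝 L) := tendsto_atBot_iInf hmono
  have goal1 : Tendsto (fun x : ℝ => ((rectC G (x:ℂ)).re : EReal)) atBot (𝓝 L) := by
    apply hTf.congr'
    filter_upwards [eventually_le_atBot (-1:ℝ)] with x hx
    have hx0 : x < 0 := by linarith
    simp only [hf, min_eq_left hx]
    rw [S11.rectC_real G x hx0]
    simp [Complex.ofReal_re]
  have hL0 : L ≤ 0 := by
    have h1 : L ≤ f (-1) := iInf_le f (-1)
    have h2 : f (-1) ≤ (0:EReal) := by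
      simp only [hf, min_self]
      rw [show (0:EReal) = ((0:ℝ):EReal) from rfl, EReal.coe_le_coe_iff]
      exact S11.cR_nonpos G (-1) (by norm_num)
    exact h1.trans h2
  have hLle : ∀ x : ℝ, x < 0 → L ≤ ((S11.mR μ x : ℝ) : EReal) := by
    intro x hx
    have h1 : L ≤ f (S11.hR l μ x) := iInf_le f _
    have h2 : S11.cR G (min (S11.hR l μ x) (-1)) ≤ S11.cR G (S11.hR l μ x) :=
      S11.cR_mono G _ _ (min_le_left _ _) (S11.hR_neg l hl1 hl2 μ x hx).le
    calc L ≤ f (S11.hR l μ x) := h1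
      _ ≤ ((S11.cR G (S11.hR l μ x) : ℝ) : EReal) := EReal.coe_le_coe_iff.mpr h2
      _ = ((S11.mR μ x : ℝ) : EReal) := by rw [hkey x hx]
  have hmE : Tendsto (fun x : ℝ => ((S11.mR μ x : ℝ) : EReal)) atBot
      (𝓝 ((μ0 - 1 : ℝ) : EReal)) :=
    (continuous_coe_real_ereal.tendsto _).comp (S11.mR_tendsto μ)
  rcases eq_or_ne (μ ({0} : Set ℝ)) 0 with h0 | h0
  · -- no atom at zero
    have hμ00 : μ0 = 0 := by rw [hμ0, h0]; simp
    have hL1 : L ≤ ((-1:ℝ) : EReal) := by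
      have hev : ∀ᶠ x in atBot, L ≤ ((S11.mR μ x : ℝ) : EReal) := by
        filter_upwards [eventually_lt_atBot (0:ℝ)] with x hx
        exact hLle x hx
      have := ge_of_tendsto hmE hev
      rwa [hμ00, show ((0:ℝ) - 1 : ℝ) = (-1:ℝ) by ring] at this
    have hnot : ¬ ((-1 : EReal) < L) := by
      apply not_lt.mpr
      rw [show (-1 : EReal) = ((-1:ℝ) : EReal) from rfl]
      exact hL1
    refine ⟨L, goal1, hL0, ?_, ?_⟩
    · constructor
      · intro h; exact absurd h (by rw [h0]; simp)
      · intro h; exact absurd h hnot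
    · intro h; exact absurd h hnot
  · -- atom at zero
    have hpos : 0 < μ ({0} : Set ℝ) := pos_iff_ne_zero.mpr h0
    have hμ0pos : 0 < μ0 := ENNReal.toReal_pos h0 (measure_ne_top μ _)
    have hc : 0 < μ0 * (1 - l) := by nlinarith
    have htb : Tendsto (S11.hR l μ) atBot atBot := by
      apply tendsto_atBot_mono' atBot ?_ ((tendsto_id (α := ℝ)).atBot_mul_const hc)
      filter_upwards [eventually_lt_atBot (0:ℝ)] with x hx
      have h1 := S11.mR_ge μ x hx.le
      have h2 := S11.mR_gt μ x hx.le
      have h3 := S11.mR_nonpos μ x hx.le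
      show S11.hR l μ x ≤ x * (μ0 * (1-l))
      rw [S11.hR]
      have hA : μ0 * (1-l) ≤ (1 + S11.mR μ x) * (1 + l * S11.mR μ x) := by
        apply mul_le_mul (by linarith) (by nlinarith) (by linarith) (by linarith)
      nlinarith [mul_nonneg (neg_nonneg.mpr hx.le) (sub_nonneg.mpr hA)]
    have hcomp : Tendsto (fun x => f (S11.hR l μ x)) atBot (𝓝 L) := hTf.comp htb
    have hcomp2 : Tendsto (fun x : ℝ => ((S11.mR μ x : ℝ) : EReal)) atBot (𝓝 L) := by
      apply hcomp.congr'
      filter_upwards [htb.eventually (eventually_le_atBot (-1:ℝ)),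
        eventually_lt_atBot (0:ℝ)] with x h1 h2
      simp only [hf, min_eq_left h1]
      rw [hkey x h2]
    have hLeq : L = ((μ0 - 1 : ℝ) : EReal) := tendsto_nhds_unique hcomp2 hmE
    refine ⟨L, goal1, hL0, ?_, ?_⟩
    · constructor
      · intro _
        rw [hLeq, show (-1 : EReal) = ((-1:ℝ) : EReal) from rfl]
        exact EReal.coe_lt_coe_iff.mpr (by linarith)
      · intro _; exact hpos
    · intro _
      exact ⟨μ0 - 1, hLeq, by ring⟩


end
end

section
/- Let λ ∈ (0,1); let μ be a symmetric Borel probability measure on ℝ that is ⊞_λ-infinitely divisible with rectangular R-transform C, and let ν, ρ be symmetric Borel probability measures on ℝ such that ρ is the rectangular free convolution μ ⊞_λ ν. If ρ({0}) > 0, then μ({0}) + ν({0}) > 1 and ρ({0}) = μ({0}) + ν({0}) − 1. -/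
open MeasureTheory Complex Set Filter Topology

noncomputable section

namespace S19

/-- real version of the `Mt` kernel integral -/
def mre (μ : Measure ℝ) (x : ℝ) : ℝ := ∫ t : ℝ, x * t ^ 2 / (1 - x * t ^ 2) ∂μ

/-- real version of `Tfun` -/
def Tre (l w : ℝ) : ℝ := (l * w + 1) * (w + 1)

/-- real version of `Ht` -/
def hre (l : ℝ) (μ : Measure ℝ) (x : ℝ) : ℝ := x * Tre l (mre μ x)

/-- real version of `rectC` -/
def cre (G : Measure ℝ) (x : ℝ) : ℝ := x * ∫ t : ℝ, (1 + t ^ 2) / (1 - x * t ^ 2) ∂G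

lemma denom_pos {x t : ℝ} (hx : x < 0) : 0 < 1 - x * t ^ 2 := by nlinarith [sq_nonneg t]

lemma int1 (μ : Measure ℝ) [IsFiniteMeasure μ] {x : ℝ} (hx : x < 0) :
    Integrable (fun t : ℝ => x * t ^ 2 / (1 - x * t ^ 2)) μ := by
  have hc : Continuous (fun t : ℝ => x * t ^ 2 / (1 - x * t ^ 2)) := by
    apply Continuous.div (by continuity) (by continuity)
    exact fun t => (denom_pos hx).ne'
  refine (integrable_const (1 : ℝ)).mono' hc.aestronglyMeasurable ?_
  filter_upwards with t
  rw [Real.norm_eq_abs, abs_div, abs_of_pos (denom_pos hx), abs_of_nonpos (by nlinarith [sq_nonneg t])]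
  rw [div_le_one (denom_pos hx)]
  nlinarith [sq_nonneg t]

lemma int2 (G : Measure ℝ) [IsFiniteMeasure G] {x : ℝ} (hx : x < 0) :
    Integrable (fun t : ℝ => (1 + t ^ 2) / (1 - x * t ^ 2)) G := by
  have hc : Continuous (fun t : ℝ => (1 + t ^ 2) / (1 - x * t ^ 2)) := by
    apply Continuous.div (by continuity) (by continuity)
    exact fun t => (denom_pos hx).ne'
  refine (integrable_const (max 1 (-x)⁻¹ : ℝ)).mono' hc.aestronglyMeasurable ?_
  filter_upwards with t
  rw [Real.norm_eq_abs, abs_div, abs_of_pos (denom_pos hx),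
    abs_of_pos (by positivity), div_le_iff₀ (denom_pos hx)]
  rcases le_total 1 (-x)⁻¹ with h | h
  · rw [max_eq_right h]
    have h2 : (-x)⁻¹ * (-x) = 1 := inv_mul_cancel₀ (by linarith)
    nlinarith [sq_nonneg t]
  · rw [max_eq_left h]
    have hx' : (0:ℝ) < -x := by linarith
    have h3 : (-x)⁻¹ * (-x) = 1 := inv_mul_cancel₀ hx'.ne'
    have h2 : 1 ≤ -x := by nlinarith
    nlinarith [sq_nonneg t]

lemma mre_nonpos (μ : Measure ℝ) [IsFiniteMeasure μ] {x : ℝ} (hx : x < 0) : mre μ x ≤ 0 := by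
  apply integral_nonpos
  intro t
  apply div_nonpos_of_nonpos_of_nonneg (by nlinarith [sq_nonneg t]) (denom_pos hx).le

lemma mre_gt (μ : Measure ℝ) [IsProbabilityMeasure μ] {x : ℝ} (hx : x < 0) : -1 < mre μ x := by
  have key : 0 < ∫ t : ℝ, (1 - x * t ^ 2)⁻¹ ∂μ := by
    rw [integral_pos_iff_support_of_nonneg (fun t => le_of_lt (inv_pos.2 (denom_pos hx))) ?_]
    · have : Function.support (fun t : ℝ => (1 - x * t ^ 2)⁻¹) = univ := by
        ext t; simp [Function.mem_support, (denom_pos hx (t := t)).ne']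
      rw [this]
      simp
    · have hc : Continuous (fun t : ℝ => (1 - x * t ^ 2)⁻¹) := by
        apply Continuous.inv₀ (by continuity)
        exact fun t => (denom_pos hx).ne'
      refine (integrable_const (1 : ℝ)).mono' hc.aestronglyMeasurable ?_
      filter_upwards with t
      rw [Real.norm_eq_abs, abs_of_pos (inv_pos.2 (denom_pos hx))]
      exact inv_le_one_of_one_le₀ (by nlinarith [sq_nonneg t])
  have h1 : (fun t : ℝ => (1 - x * t ^ 2)⁻¹) = fun t : ℝ => x * t ^ 2 / (1 - x * t ^ 2) + 1 := by
    ext t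
    rw [eq_comm, div_add' _ _ _ (denom_pos hx).ne', div_eq_inv_mul]
    ring_nf
  rw [h1, integral_add (int1 μ hx) (integrable_const 1), integral_const] at key
  simp only [Measure.real, measure_univ, ENNReal.toReal_one, smul_eq_mul, one_mul, one_smul] at key
  unfold mre
  linarith

lemma Mt_real (μ : Measure ℝ) [IsFiniteMeasure μ] {x : ℝ} (hx : x < 0) :
    Mt μ (x : ℂ) = ((mre μ x : ℝ) : ℂ) := by
  have hoc : ∫ t : ℝ, ((x * t ^ 2 / (1 - x * t ^ 2) : ℝ) : ℂ) ∂μ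
      = ((∫ t : ℝ, x * t ^ 2 / (1 - x * t ^ 2) ∂μ : ℝ) : ℂ) := integral_ofReal
  rw [Mt, mre, ← hoc]
  congr 1
  ext t
  have h := (denom_pos hx (t := t)).ne'
  push_cast
  rfl

lemma Tfun_real (l w : ℝ) : Tfun l (w : ℂ) = ((Tre l w : ℝ) : ℂ) := by
  rw [Tfun, Tre]; push_cast; ring

lemma Ht_real (l : ℝ) (μ : Measure ℝ) [IsFiniteMeasure μ] {x : ℝ} (hx : x < 0) :
    Ht l μ (x : ℂ) = ((hre l μ x : ℝ) : ℂ) := by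
  rw [Ht, hre, Mt_real μ hx, Tre]
  push_cast
  ring

lemma rectC_real (G : Measure ℝ) [IsFiniteMeasure G] {x : ℝ} (hx : x < 0) :
    rectC G (x : ℂ) = ((cre G x : ℝ) : ℂ) := by
  have hoc : ∫ t : ℝ, (((1 + t ^ 2) / (1 - x * t ^ 2) : ℝ) : ℂ) ∂G
      = ((∫ t : ℝ, (1 + t ^ 2) / (1 - x * t ^ 2) ∂G : ℝ) : ℂ) := integral_ofReal
  rw [rectC, cre, Complex.ofReal_mul, ← hoc]
  congr 1
  congr 1
  ext t
  have h := (denom_pos hx (t := t)).ne'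
  push_cast
  rfl

lemma cre_nonpos (G : Measure ℝ) [IsFiniteMeasure G] {x : ℝ} (hx : x < 0) : cre G x ≤ 0 := by
  apply mul_nonpos_of_nonpos_of_nonneg hx.le
  apply integral_nonneg
  intro t
  exact div_nonneg (by positivity) (denom_pos hx).le

lemma Tre_pos {l w : ℝ} (hl : l ∈ Set.Ioo (0:ℝ) 1) (hw : -1 < w) : 0 < Tre l w := by
  obtain ⟨hl0, hl1⟩ := hl
  rw [Tre]
  have h1 : 0 < l * (w + 1) := mul_pos hl0 (by linarith)
  have h2 : 0 < l * w + 1 := by nlinarith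
  exact mul_pos h2 (by linarith)

lemma Tre_inj {l a b : ℝ} (hl : l ∈ Set.Ioo (0:ℝ) 1) (ha : -1 < a) (hb : -1 < b)
    (h : Tre l a = Tre l b) : a = b := by
  obtain ⟨hl0, hl1⟩ := hl
  rw [Tre, Tre] at h
  have key : (a - b) * (l * (a + b) + l + 1) = 0 := by linear_combination h
  have hpos : 0 < l * (a + b) + l + 1 := by nlinarith
  have := mul_eq_zero.1 key
  rcases this with h1 | h1
  · linarith
  · linarith

lemma hre_neg (l : ℝ) (hl : l ∈ Set.Ioo (0:ℝ) 1) (μ : Measure ℝ) [IsProbabilityMeasure μ]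
    {x : ℝ} (hx : x < 0) : hre l μ x < 0 :=
  mul_neg_of_neg_of_pos hx (Tre_pos hl (mre_gt μ hx))

lemma cre_mono (G : Measure ℝ) [IsFiniteMeasure G] {x y : ℝ} (hxy : x ≤ y) (hy : y < 0) :
    cre G x ≤ cre G y := by
  have hx : x < 0 := lt_of_le_of_lt hxy hy
  rw [cre, cre, ← integral_const_mul, ← integral_const_mul]
  apply integral_mono ((int2 G hx).const_mul x) ((int2 G hy).const_mul y)
  intro t
  simp only
  rw [mul_div_assoc', mul_div_assoc', div_le_div_iff₀ (denom_pos hx) (denom_pos hy)]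
  nlinarith [sq_nonneg t]

lemma ker_abs_le {x t : ℝ} (hx : x < 0) : ‖x * t ^ 2 / (1 - x * t ^ 2)‖ ≤ 1 := by
  rw [Real.norm_eq_abs, abs_div, abs_of_pos (denom_pos hx),
    abs_of_nonpos (by nlinarith [sq_nonneg t]), div_le_one (denom_pos hx)]
  nlinarith [sq_nonneg t]

lemma mre_tendsto (μ : Measure ℝ) [IsProbabilityMeasure μ] :
    Tendsto (fun x => mre μ x) atBot (𝓝 ((μ ({0} : Set ℝ)).toReal - 1)) := by
  have hlim : ∀ t : ℝ, Tendsto (fun x : ℝ => x * t ^ 2 / (1 - x * t ^ 2)) atBot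
      (𝓝 (({0} : Set ℝ).indicator (1 : ℝ → ℝ) t - 1)) := by
    intro t
    by_cases ht : t = 0
    · subst ht
      have h0 : (fun x : ℝ => x * (0:ℝ) ^ 2 / (1 - x * (0:ℝ) ^ 2)) = fun _ => (0:ℝ) := by
        ext x; norm_num
      rw [h0]
      have : ({0} : Set ℝ).indicator (1 : ℝ → ℝ) 0 - 1 = 0 := by simp
      rw [this]
      exact tendsto_const_nhds
    · have ht2 : (0:ℝ) < t ^ 2 := by positivity
      have h1 : Tendsto (fun x : ℝ => 1 - x * t ^ 2) atBot atTop := by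
        have hmul : Tendsto (fun x : ℝ => x * t ^ 2) atBot atBot :=
          Tendsto.atBot_mul_const ht2 tendsto_id
        have hneg : Tendsto (fun x : ℝ => -(x * t ^ 2)) atBot atTop :=
          tendsto_neg_atBot_atTop.comp hmul
        have := tendsto_atTop_add_const_left atBot (1:ℝ) hneg
        simpa [sub_eq_add_neg] using this
      have h2 : Tendsto (fun x : ℝ => (1 - x * t ^ 2)⁻¹) atBot (𝓝 0) :=
        h1.inv_tendsto_atTop
      have h3 : Tendsto (fun x : ℝ => (1 - x * t ^ 2)⁻¹ - 1) atBot (𝓝 (0 - 1)) :=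
        h2.sub tendsto_const_nhds
      have heq : ∀ᶠ x in (atBot : Filter ℝ), (1 - x * t ^ 2)⁻¹ - 1 = x * t ^ 2 / (1 - x * t ^ 2) := by
        filter_upwards [eventually_lt_atBot (0:ℝ)] with x hx
        rw [eq_div_iff (denom_pos hx).ne', sub_mul, inv_mul_cancel₀ (denom_pos hx).ne']
        ring
      have hind : ({0} : Set ℝ).indicator (1 : ℝ → ℝ) t - 1 = 0 - 1 := by
        simp [Set.indicator_of_notMem (by simpa using ht : t ∉ ({0} : Set ℝ)), Pi.single_apply, ht]
      rw [hind]
      exact Tendsto.congr' heq h3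
  have key := tendsto_integral_filter_of_dominated_convergence (μ := μ)
      (F := fun (x : ℝ) (t : ℝ) => x * t ^ 2 / (1 - x * t ^ 2))
      (f := fun t => ({0} : Set ℝ).indicator (1 : ℝ → ℝ) t - 1)
      (bound := fun _ => (1:ℝ))
      (by filter_upwards [eventually_lt_atBot (0:ℝ)] with x hx
          exact (int1 μ hx).aestronglyMeasurable)
      (by filter_upwards [eventually_lt_atBot (0:ℝ)] with x hx
          filter_upwards with t
          exact ker_abs_le hx)
      (integrable_const 1)
      (by filter_upwards with t; exact hlim t)
  have hint : ∫ t : ℝ, (({0} : Set ℝ).indicator (1 : ℝ → ℝ) t - 1) ∂μ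
      = (μ ({0} : Set ℝ)).toReal - 1 := by
    have h1 : Integrable (({0} : Set ℝ).indicator (1 : ℝ → ℝ)) μ := by
      have := (integrable_const (μ := μ) (c := (1:ℝ))).indicator (measurableSet_singleton (0:ℝ))
      simpa [Pi.one_def] using this
    rw [integral_sub h1 (integrable_const 1), integral_indicator_one (measurableSet_singleton (0:ℝ))]
    simp
    rfl
  have key2 : Tendsto (fun x => mre μ x) atBot
      (𝓝 (∫ t : ℝ, (({0} : Set ℝ).indicator (1 : ℝ → ℝ) t - 1) ∂μ)) := key
  rw [hint] at key2
  exact key2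

lemma continuous_Tre (l : ℝ) : Continuous (Tre l) := by
  unfold Tre; continuity

lemma hre_atBot (l : ℝ) (hl : l ∈ Set.Ioo (0:ℝ) 1) (μ : Measure ℝ) [IsProbabilityMeasure μ]
    (hm : 0 < (μ ({0} : Set ℝ)).toReal) : Tendsto (hre l μ) atBot atBot := by
  have h1 : Tendsto (fun x => Tre l (mre μ x)) atBot (𝓝 (Tre l ((μ ({0} : Set ℝ)).toReal - 1))) :=
    ((continuous_Tre l).tendsto _).comp (mre_tendsto μ)
  have hpos : 0 < Tre l ((μ ({0} : Set ℝ)).toReal - 1) := Tre_pos hl (by linarith)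
  exact Filter.Tendsto.atBot_mul_pos hpos tendsto_id h1

/-- the complement of the nonnegative real axis -/
def Om : Set ℂ := posAxisᶜ

lemma isClosed_posAxis : IsClosed posAxis := by
  have : posAxis = Complex.im ⁻¹' {0} ∩ Complex.re ⁻¹' (Ici 0) := by
    ext z; simp [posAxis, mem_preimage]
  rw [this]
  exact ((isClosed_singleton).preimage Complex.continuous_im).inter
    ((isClosed_Ici).preimage Complex.continuous_re)

lemma isOpen_Om : IsOpen Om := isClosed_posAxis.isOpen_compl

lemma ofReal_neg_mem_Om {x : ℝ} (hx : x < 0) : (x : ℂ) ∈ Om := by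
  intro h
  rw [posAxis, mem_setOf_eq, Complex.ofReal_re] at h
  exact absurd h.2 (not_le.2 hx)

lemma posAxis_nonempty : posAxis.Nonempty := ⟨0, by simp [posAxis]⟩

lemma infDist_pos_of_mem_Om {z : ℂ} (hz : z ∈ Om) : 0 < Metric.infDist z posAxis :=
  (isClosed_posAxis.notMem_iff_infDist_pos posAxis_nonempty).1 hz

lemma norm_pos_of_mem_Om {z : ℂ} (hz : z ∈ Om) : 0 < ‖z‖ := by
  rw [norm_pos_iff]
  rintro rfl
  exact hz (by simp [posAxis])

lemma denom_ne_zero {z : ℂ} (hz : z ∈ Om) (t : ℝ) : 1 - z * (t : ℂ) ^ 2 ≠ 0 := by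
  intro h
  have ht : (t : ℂ) ^ 2 ≠ 0 := by
    intro h0
    rw [h0, mul_zero] at h
    norm_num at h
  have hz2 : z = ((t ^ 2)⁻¹ : ℝ) := by
    have h1 : z * (t:ℂ)^2 = 1 := by linear_combination -h
    have h2 : z = 1 / (t:ℂ)^2 := by rw [eq_div_iff ht]; exact h1
    rw [h2]
    push_cast
    rw [one_div]
  apply hz
  rw [hz2, posAxis, mem_setOf_eq]
  constructor
  · exact Complex.ofReal_im _
  · rw [Complex.ofReal_re]
    positivity

lemma denom_lb {z : ℂ} {s : ℝ} (hs : 0 < s) :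
    s * Metric.infDist z posAxis ≤ ‖1 - z * (s : ℂ)‖ := by
  have hmem : ((s⁻¹ : ℝ) : ℂ) ∈ posAxis := by
    refine ⟨Complex.ofReal_im _, ?_⟩
    rw [Complex.ofReal_re]
    positivity
  have h1 : Metric.infDist z posAxis ≤ dist z ((s⁻¹ : ℝ) : ℂ) :=
    Metric.infDist_le_dist_of_mem hmem
  have h2 : ‖1 - z * (s : ℂ)‖ = s * dist z ((s⁻¹ : ℝ) : ℂ) := by
    rw [dist_eq_norm]
    have h3 : (1 : ℂ) - z * s = (s : ℂ) * (((s⁻¹ : ℝ) : ℂ) - z) := by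
      have hs' : (s : ℂ) ≠ 0 := by exact_mod_cast hs.ne'
      push_cast
      field_simp
    rw [h3, norm_mul, Complex.norm_real, Real.norm_of_nonneg hs.le, norm_sub_rev]
  rw [h2]
  exact mul_le_mul_of_nonneg_left h1 hs.le

lemma denom_lb2 {z : ℂ} {s : ℝ} (hs : 0 ≤ s) (h : ‖z‖ * s ≤ 1 / 2) :
    (1:ℝ)/2 ≤ ‖1 - z * (s : ℂ)‖ := by
  have h1 : ‖(1:ℂ)‖ - ‖z * (s:ℂ)‖ ≤ ‖1 - z * (s:ℂ)‖ := norm_sub_norm_le _ _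
  rw [norm_one, norm_mul, Complex.norm_real, Real.norm_of_nonneg hs] at h1
  linarith

lemma hasDerivAt_ker1 {w : ℂ} (t : ℝ) (h : 1 - w * (t:ℂ)^2 ≠ 0) :
    HasDerivAt (fun z : ℂ => z * (t:ℂ)^2 / (1 - z * (t:ℂ)^2))
      ((t:ℂ)^2 / (1 - w * (t:ℂ)^2)^2) w := by
  have h1 : HasDerivAt (fun z : ℂ => z * (t:ℂ)^2) ((t:ℂ)^2) w := by
    simpa using (hasDerivAt_id w).mul_const ((t:ℂ)^2)
  have h2 : HasDerivAt (fun z : ℂ => 1 - z * (t:ℂ)^2) (-(t:ℂ)^2) w := by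
    exact h1.const_sub 1
  have h3 := h1.div h2 h
  refine h3.congr_deriv ?_
  field_simp
  ring

lemma hasDerivAt_ker2 {w : ℂ} (t : ℝ) (h : 1 - w * (t:ℂ)^2 ≠ 0) :
    HasDerivAt (fun z : ℂ => (1 + (t:ℂ)^2) / (1 - z * (t:ℂ)^2))
      ((1 + (t:ℂ)^2) * (t:ℂ)^2 / (1 - w * (t:ℂ)^2)^2) w := by
  have h1 : HasDerivAt (fun z : ℂ => z * (t:ℂ)^2) ((t:ℂ)^2) w := by
    simpa using (hasDerivAt_id w).mul_const ((t:ℂ)^2)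
  have h2 : HasDerivAt (fun z : ℂ => 1 - z * (t:ℂ)^2) (-(t:ℂ)^2) w := by
    exact h1.const_sub 1
  have h3 := (hasDerivAt_const w (1 + (t:ℂ)^2)).div h2 h
  refine h3.congr_deriv ?_
  field_simp
  ring

lemma norm_sq_coe (t : ℝ) : ‖(t:ℂ)^2‖ = t^2 := by
  rw [norm_pow, Complex.norm_real, Real.norm_eq_abs, _root_.sq_abs]

lemma coe_sq (t : ℝ) : ((t^2 : ℝ) : ℂ) = (t:ℂ)^2 := by push_cast; rfl

/-- uniform bound for the derivative of the first kernel on a ball -/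
lemma key_bound1 {w : ℂ} {d M : ℝ} (hd : 0 < d) (hM : 0 < M)
    (hdw : d/2 ≤ Metric.infDist w posAxis) (hM1 : M/2 ≤ ‖w‖) (hM2 : ‖w‖ ≤ 2*M) (t : ℝ) :
    ‖(t:ℂ)^2 / (1 - w * (t:ℂ)^2)^2‖ ≤ max (4/M) (16*M/d^2) := by
  set s := t^2 with hs_def
  have hs : 0 ≤ s := sq_nonneg t
  have hw0 : 0 < ‖w‖ := lt_of_lt_of_le (by linarith) hM1
  rw [norm_div, norm_sq_coe, norm_pow]
  rcases le_or_gt (‖w‖ * s) (1/2) with hA | hB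
  · have hden : (1:ℝ)/2 ≤ ‖1 - w * (t:ℂ)^2‖ := by
      rw [← coe_sq]; exact denom_lb2 hs hA
    have hD : (1:ℝ)/4 ≤ ‖1 - w * (t:ℂ)^2‖^2 := by nlinarith
    have hsM : s ≤ 1/M := by
      have : (M/2) * s ≤ 1/2 := le_trans (by nlinarith) hA
      rw [le_div_iff₀ hM]; nlinarith
    calc s / ‖1 - w * (t:ℂ)^2‖^2 ≤ s / (1/4) := by
          apply div_le_div_of_nonneg_left hs (by norm_num) hD
      _ = 4 * s := by ring
      _ ≤ 4 / M := by rw [div_eq_mul_inv, ← one_div]; nlinarith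
      _ ≤ max (4/M) (16*M/d^2) := le_max_left _ _
  · have hs0 : 0 < s := by
      by_contra hc
      push_neg at hc
      have : s = 0 := le_antisymm hc hs
      rw [this, mul_zero] at hB; norm_num at hB
    have hden : s * (d/2) ≤ ‖1 - w * (t:ℂ)^2‖ := by
      rw [← coe_sq]
      calc s * (d/2) ≤ s * Metric.infDist w posAxis := by nlinarith
        _ ≤ _ := denom_lb hs0
    have hdenpos : 0 < ‖1 - w * (t:ℂ)^2‖ := lt_of_lt_of_le (by positivity) hden
    have hsmin : 1/(4*M) ≤ s := by
      rw [div_le_iff₀ (by positivity)]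
      nlinarith
    calc s / ‖1 - w * (t:ℂ)^2‖^2 ≤ s / (s * (d/2))^2 := by
          apply div_le_div_of_nonneg_left hs (by positivity)
            (pow_le_pow_left₀ (by positivity) hden 2)
      _ = 4 / (s * d^2) := by field_simp; ring
      _ ≤ 16*M/d^2 := by
          rw [div_le_div_iff₀ (by positivity) (by positivity)]
          have hkey : 16*M*d^2*(1/(4*M)) = 4*d^2 := by field_simp; ring
          nlinarith [mul_le_mul_of_nonneg_left hsmin (show (0:ℝ) ≤ 16*M*d^2 by positivity)]
      _ ≤ max (4/M) (16*M/d^2) := le_max_right _ _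

/-- uniform bound for the derivative of the second kernel on a ball -/
lemma key_bound2 {w : ℂ} {d M : ℝ} (hd : 0 < d) (hM : 0 < M)
    (hdw : d/2 ≤ Metric.infDist w posAxis) (hM1 : M/2 ≤ ‖w‖) (hM2 : ‖w‖ ≤ 2*M) (t : ℝ) :
    ‖(1 + (t:ℂ)^2) * (t:ℂ)^2 / (1 - w * (t:ℂ)^2)^2‖ ≤
      max (4*(1/M)*(1+1/M)) (4*(4*M+1)/d^2) := by
  set s := t^2 with hs_def
  have hs : 0 ≤ s := sq_nonneg t
  have hw0 : 0 < ‖w‖ := lt_of_lt_of_le (by linarith) hM1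
  have hnum : ‖(1 + (t:ℂ)^2) * (t:ℂ)^2‖ = (1+s) * s := by
    rw [norm_mul, norm_sq_coe, ← coe_sq]
    congr 1
    rw [show (1 : ℂ) + ((s:ℝ):ℂ) = (((1+s : ℝ)):ℂ) by push_cast; ring, Complex.norm_real,
      Real.norm_of_nonneg (by linarith)]
  rw [norm_div, hnum, norm_pow]
  rcases le_or_gt (‖w‖ * s) (1/2) with hA | hB
  · have hden : (1:ℝ)/2 ≤ ‖1 - w * (t:ℂ)^2‖ := by
      rw [← coe_sq]; exact denom_lb2 hs hA
    have hD : (1:ℝ)/4 ≤ ‖1 - w * (t:ℂ)^2‖^2 := by nlinarith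
    have hsM : s ≤ 1/M := by
      have : (M/2) * s ≤ 1/2 := le_trans (by nlinarith) hA
      rw [le_div_iff₀ hM]; nlinarith
    have hMinv : 0 < 1/M := by positivity
    calc (1+s) * s / ‖1 - w * (t:ℂ)^2‖^2 ≤ (1+s) * s / (1/4) := by
          apply div_le_div_of_nonneg_left (by nlinarith) (by norm_num) hD
      _ = 4 * ((1+s) * s) := by ring
      _ ≤ 4*(1/M)*(1+1/M) := by nlinarith
      _ ≤ _ := le_max_left _ _
  · have hs0 : 0 < s := by
      by_contra hc
      push_neg at hc
      have : s = 0 := le_antisymm hc hs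
      rw [this, mul_zero] at hB; norm_num at hB
    have hden : s * (d/2) ≤ ‖1 - w * (t:ℂ)^2‖ := by
      rw [← coe_sq]
      calc s * (d/2) ≤ s * Metric.infDist w posAxis := by nlinarith
        _ ≤ _ := denom_lb hs0
    have hdenpos : 0 < ‖1 - w * (t:ℂ)^2‖ := lt_of_lt_of_le (by positivity) hden
    have hsmin : 1/(4*M) ≤ s := by
      rw [div_le_iff₀ (by positivity)]
      nlinarith
    calc (1+s) * s / ‖1 - w * (t:ℂ)^2‖^2 ≤ (1+s) * s / (s * (d/2))^2 := by
          apply div_le_div_of_nonneg_left (by nlinarith) (by positivity)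
            (pow_le_pow_left₀ (by positivity) hden 2)
      _ = 4 * (1+s) / (s * d^2) := by field_simp; ring
      _ ≤ 4*(4*M+1)/d^2 := by
          rw [div_le_div_iff₀ (by positivity) (by positivity)]
          have hkey : 16*M*d^2*(1/(4*M)) = 4*d^2 := by field_simp; ring
          nlinarith [mul_le_mul_of_nonneg_left hsmin (show (0:ℝ) ≤ 16*M*d^2 by positivity),
            mul_nonneg (mul_nonneg hs hd.le) (mul_nonneg hs hd.le)]
      _ ≤ _ := le_max_right _ _

lemma cont_ker1 {w : ℂ} (hw : w ∈ Om) :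
    Continuous (fun t : ℝ => w * (t:ℂ)^2 / (1 - w * (t:ℂ)^2)) :=
  Continuous.div (continuous_const.mul (Complex.continuous_ofReal.pow 2))
    (continuous_const.sub (continuous_const.mul (Complex.continuous_ofReal.pow 2)))
    (fun t => denom_ne_zero hw t)

lemma cont_ker1' {w : ℂ} (hw : w ∈ Om) :
    Continuous (fun t : ℝ => (t:ℂ)^2 / (1 - w * (t:ℂ)^2)^2) :=
  Continuous.div (Complex.continuous_ofReal.pow 2)
    ((continuous_const.sub (continuous_const.mul (Complex.continuous_ofReal.pow 2))).pow 2)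
    (fun t => pow_ne_zero 2 (denom_ne_zero hw t))

lemma cont_ker2 {w : ℂ} (hw : w ∈ Om) :
    Continuous (fun t : ℝ => (1 + (t:ℂ)^2) / (1 - w * (t:ℂ)^2)) :=
  Continuous.div (continuous_const.add (Complex.continuous_ofReal.pow 2))
    (continuous_const.sub (continuous_const.mul (Complex.continuous_ofReal.pow 2)))
    (fun t => denom_ne_zero hw t)

lemma cont_ker2' {w : ℂ} (hw : w ∈ Om) :
    Continuous (fun t : ℝ => (1 + (t:ℂ)^2) * (t:ℂ)^2 / (1 - w * (t:ℂ)^2)^2) :=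
  Continuous.div ((continuous_const.add (Complex.continuous_ofReal.pow 2)).mul
      (Complex.continuous_ofReal.pow 2))
    ((continuous_const.sub (continuous_const.mul (Complex.continuous_ofReal.pow 2))).pow 2)
    (fun t => pow_ne_zero 2 (denom_ne_zero hw t))

lemma val_bound1 {z : ℂ} (hz : z ∈ Om) (t : ℝ) :
    ‖z * (t:ℂ)^2 / (1 - z * (t:ℂ)^2)‖ ≤ max 1 (‖z‖ / Metric.infDist z posAxis) := by
  set d := Metric.infDist z posAxis with hd_def
  have hd : 0 < d := infDist_pos_of_mem_Om hz
  set M := ‖z‖ with hM_def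
  have hM : 0 < M := norm_pos_of_mem_Om hz
  set s := t^2 with hs_def
  have hs : 0 ≤ s := sq_nonneg t
  have hnum : ‖z * (t:ℂ)^2‖ = M * s := by rw [norm_mul, norm_sq_coe]
  rw [norm_div, hnum]
  rcases le_or_gt (M * s) (1/2) with hA | hB
  · have hden : (1:ℝ)/2 ≤ ‖1 - z * (t:ℂ)^2‖ := by
      rw [← coe_sq]; exact denom_lb2 hs hA
    calc M * s / ‖1 - z * (t:ℂ)^2‖ ≤ (1/2) / (1/2) := by
          apply div_le_div₀ (by norm_num) hA (by norm_num) hden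
      _ = 1 := by norm_num
      _ ≤ _ := le_max_left _ _
  · have hs0 : 0 < s := by
      by_contra hc; push_neg at hc
      have : s = 0 := le_antisymm hc hs
      rw [this, mul_zero] at hB; norm_num at hB
    have hden : s * d ≤ ‖1 - z * (t:ℂ)^2‖ := by rw [← coe_sq]; exact denom_lb hs0
    calc M * s / ‖1 - z * (t:ℂ)^2‖ ≤ M * s / (s * d) := by
          apply div_le_div_of_nonneg_left (by positivity) (by positivity) hden
      _ = M / d := by field_simp
      _ ≤ _ := le_max_right _ _

lemma val_bound2 {z : ℂ} (hz : z ∈ Om) (t : ℝ) :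
    ‖(1 + (t:ℂ)^2) / (1 - z * (t:ℂ)^2)‖ ≤
      max (2 + 1/‖z‖) ((2*‖z‖+1) / Metric.infDist z posAxis) := by
  set d := Metric.infDist z posAxis with hd_def
  have hd : 0 < d := infDist_pos_of_mem_Om hz
  set M := ‖z‖ with hM_def
  have hM : 0 < M := norm_pos_of_mem_Om hz
  set s := t^2 with hs_def
  have hs : 0 ≤ s := sq_nonneg t
  have hnum : ‖(1 + (t:ℂ)^2)‖ = 1 + s := by
    rw [← coe_sq, show (1 : ℂ) + ((s:ℝ):ℂ) = (((1+s : ℝ)):ℂ) by push_cast; ring,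
      Complex.norm_real, Real.norm_of_nonneg (by linarith)]
  rw [norm_div, hnum]
  rcases le_or_gt (M * s) (1/2) with hA | hB
  · have hden : (1:ℝ)/2 ≤ ‖1 - z * (t:ℂ)^2‖ := by
      rw [← coe_sq]; exact denom_lb2 hs hA
    have hsM : s ≤ 1/(2*M) := by rw [le_div_iff₀ (by positivity)]; nlinarith
    calc (1+s) / ‖1 - z * (t:ℂ)^2‖ ≤ (1+s) / (1/2) := by
          apply div_le_div_of_nonneg_left (by linarith) (by norm_num) hden
      _ = 2 * (1+s) := by ring
      _ ≤ 2 + 1/M := by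
          have : 2 * s ≤ 1/M := by
            rw [le_div_iff₀ (show (0:ℝ) < 2*M by positivity)] at hsM
            rw [le_div_iff₀ hM]
            nlinarith
          linarith
      _ ≤ _ := le_max_left _ _
  · have hs0 : 0 < s := by
      by_contra hc; push_neg at hc
      have : s = 0 := le_antisymm hc hs
      rw [this, mul_zero] at hB; norm_num at hB
    have hden : s * d ≤ ‖1 - z * (t:ℂ)^2‖ := by rw [← coe_sq]; exact denom_lb hs0
    have hsmin : 1/(2*M) ≤ s := by rw [div_le_iff₀ (by positivity)]; nlinarith
    calc (1+s) / ‖1 - z * (t:ℂ)^2‖ ≤ (1+s) / (s * d) := by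
          apply div_le_div_of_nonneg_left (by linarith) (by positivity) hden
      _ ≤ (2*M+1) / d := by
          rw [div_le_div_iff₀ (by positivity) hd]
          have h1 : 1 ≤ 2*M*s := by
            rw [div_le_iff₀ (by positivity)] at hsmin
            nlinarith
          nlinarith
      _ ≤ _ := le_max_right _ _

lemma ball_facts {z : ℂ} (hz : z ∈ Om) :
    ∀ w ∈ Metric.ball z (min (Metric.infDist z posAxis / 2) (‖z‖ / 2)),
      w ∈ Om ∧ Metric.infDist z posAxis / 2 ≤ Metric.infDist w posAxis ∧
      ‖z‖/2 ≤ ‖w‖ ∧ ‖w‖ ≤ 2*‖z‖ := by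
  set d := Metric.infDist z posAxis with hd_def
  have hd : 0 < d := infDist_pos_of_mem_Om hz
  set M := ‖z‖ with hM_def
  have hM : 0 < M := norm_pos_of_mem_Om hz
  intro w hw
  rw [Metric.mem_ball] at hw
  have hdist1 : dist z w < d/2 := by
    rw [dist_comm]; exact lt_of_lt_of_le hw (min_le_left _ _)
  have hdist2 : dist w z < M/2 := lt_of_lt_of_le hw (min_le_right _ _)
  have h1 : d/2 ≤ Metric.infDist w posAxis := by
    have hL := Metric.infDist_le_infDist_add_dist (x := z) (y := w) (s := posAxis)
    linarith
  have hnorm : |‖w‖ - ‖z‖| ≤ dist w z := by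
    rw [dist_eq_norm]; exact abs_norm_sub_norm_le w z
  cases' abs_le.1 hnorm with hnl hnr
  refine ⟨?_, h1, by linarith, by linarith⟩
  intro hmem
  rw [Metric.infDist_zero_of_mem hmem] at h1
  linarith

lemma diff_Mt (μ : Measure ℝ) [IsFiniteMeasure μ] {z : ℂ} (hz : z ∈ Om) :
    DifferentiableAt ℂ (Mt μ) z := by
  set d := Metric.infDist z posAxis with hd_def
  have hd : 0 < d := infDist_pos_of_mem_Om hz
  set M := ‖z‖ with hM_def
  have hM : 0 < M := norm_pos_of_mem_Om hz
  set ε := min (d/2) (M/2) with hε_def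
  have hε : 0 < ε := lt_min (by positivity) (by positivity)
  have hb := ball_facts hz
  have key := hasDerivAt_integral_of_dominated_loc_of_deriv_le (μ := μ)
    (F := fun z t => z * (t:ℂ)^2 / (1 - z * (t:ℂ)^2))
    (F' := fun z t => (t:ℂ)^2 / (1 - z * (t:ℂ)^2)^2)
    (x₀ := z)
    (bound := fun _ => max (4/M) (16*M/d^2)) (Metric.ball_mem_nhds z hε)
    (by
      apply Filter.eventually_of_mem (Metric.ball_mem_nhds z hε)
      intro w hw
      exact (cont_ker1 (hb w hw).1).aestronglyMeasurable)
    (by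
      refine (integrable_const (max 1 (M/d))).mono' (cont_ker1 hz).aestronglyMeasurable ?_
      filter_upwards with t
      exact val_bound1 hz t)
    ((cont_ker1' hz).aestronglyMeasurable)
    (by
      filter_upwards with t
      intro w hw
      obtain ⟨h1, h2, h3, h4⟩ := hb w hw
      exact key_bound1 hd hM h2 h3 h4 t)
    (integrable_const _)
    (by
      filter_upwards with t
      intro w hw
      exact hasDerivAt_ker1 t (denom_ne_zero (hb w hw).1 t))
  exact key.2.differentiableAt

lemma diff_rectC (G : Measure ℝ) [IsFiniteMeasure G] {z : ℂ} (hz : z ∈ Om) :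
    DifferentiableAt ℂ (rectC G) z := by
  set d := Metric.infDist z posAxis with hd_def
  have hd : 0 < d := infDist_pos_of_mem_Om hz
  set M := ‖z‖ with hM_def
  have hM : 0 < M := norm_pos_of_mem_Om hz
  set ε := min (d/2) (M/2) with hε_def
  have hε : 0 < ε := lt_min (by positivity) (by positivity)
  have hb := ball_facts hz
  have key := hasDerivAt_integral_of_dominated_loc_of_deriv_le (μ := G)
    (F := fun z t => (1 + (t:ℂ)^2) / (1 - z * (t:ℂ)^2))
    (F' := fun z t => (1 + (t:ℂ)^2) * (t:ℂ)^2 / (1 - z * (t:ℂ)^2)^2)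
    (x₀ := z)
    (bound := fun _ => max (4*(1/M)*(1+1/M)) (4*(4*M+1)/d^2)) (Metric.ball_mem_nhds z hε)
    (by
      apply Filter.eventually_of_mem (Metric.ball_mem_nhds z hε)
      intro w hw
      exact (cont_ker2 (hb w hw).1).aestronglyMeasurable)
    (by
      refine (integrable_const (max (2 + 1/M) ((2*M+1)/d))).mono'
        (cont_ker2 hz).aestronglyMeasurable ?_
      filter_upwards with t
      exact val_bound2 hz t)
    ((cont_ker2' hz).aestronglyMeasurable)
    (by
      filter_upwards with t
      intro w hw
      obtain ⟨h1, h2, h3, h4⟩ := hb w hw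
      exact key_bound2 hd hM h2 h3 h4 t)
    (integrable_const _)
    (by
      filter_upwards with t
      intro w hw
      exact hasDerivAt_ker2 t (denom_ne_zero (hb w hw).1 t))
  have hint : DifferentiableAt ℂ (fun z : ℂ => ∫ t : ℝ, (1 + (t:ℂ)^2) / (1 - z * (t:ℂ)^2) ∂G) z :=
    key.2.differentiableAt
  unfold rectC
  exact differentiableAt_fun_id.mul hint

lemma diff_Ht (l : ℝ) (μ : Measure ℝ) [IsFiniteMeasure μ] {z : ℂ} (hz : z ∈ Om) :
    DifferentiableAt ℂ (Ht l μ) z := by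
  unfold Ht
  exact (differentiableAt_fun_id.mul ((differentiableAt_const _).add (diff_Mt μ hz))).mul
    ((differentiableAt_const _).add ((differentiableAt_const _).mul (diff_Mt μ hz)))

/-- identity principle: two functions differentiable on an open set containing the negative
reals which agree on a small interval `(-ε,0)` agree on all negative reals. -/
lemma eqOn_neg {f g : ℂ → ℂ} {U : Set ℂ} (hU : IsOpen U)
    (hsub : ∀ x : ℝ, x < 0 → (x : ℂ) ∈ U)
    (hf : DifferentiableOn ℂ f U) (hg : DifferentiableOn ℂ g U) {ε : ℝ} (hε : 0 < ε)
    (heq : ∀ x : ℝ, x ∈ Set.Ioo (-ε) 0 → f x = g x) :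
    ∀ x : ℝ, x < 0 → f x = g x := by
  set z₀ : ℂ := ((-ε/2 : ℝ) : ℂ) with hz₀_def
  have hz₀U : z₀ ∈ U := hsub _ (by linarith)
  set V := connectedComponentIn U z₀ with hV_def
  have hVopen : IsOpen V := hU.connectedComponentIn
  have hVpre : IsPreconnected V := isPreconnected_connectedComponentIn
  have hVU : V ⊆ U := connectedComponentIn_subset U z₀
  have hfa : AnalyticOnNhd ℂ f V := (hf.mono hVU).analyticOnNhd hVopen
  have hga : AnalyticOnNhd ℂ g V := (hg.mono hVU).analyticOnNhd hVopen
  have hneg : (fun x : ℝ => (x : ℂ)) '' (Iio 0) ⊆ V := by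
    apply IsPreconnected.subset_connectedComponentIn
    · exact (isPreconnected_Iio).image _ (Complex.continuous_ofReal.continuousOn)
    · exact ⟨-ε/2, by simp only [mem_Iio]; linarith, rfl⟩
    · rintro - ⟨x, hx, rfl⟩
      exact hsub x hx
  have hfreq : ∃ᶠ w in 𝓝[≠] z₀, f w = g w := by
    have htend : Tendsto (fun n : ℕ => ((-ε/2 + ε/4 * (1/(n+1)) : ℝ) : ℂ)) atTop (𝓝[≠] z₀) := by
      rw [tendsto_nhdsWithin_iff]
      constructor
      · have hre : Tendsto (fun n : ℕ => (-ε/2 + ε/4 * (1/(n+1)) : ℝ)) atTop (𝓝 (-ε/2)) := by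
          have h0 : Tendsto (fun n : ℕ => (1/(n+1) : ℝ)) atTop (𝓝 0) :=
            tendsto_one_div_add_atTop_nhds_zero_nat
          have := (tendsto_const_nhds (x := (-ε/2 : ℝ)) (f := atTop)).add
            ((tendsto_const_nhds (x := (ε/4 : ℝ)) (f := atTop)).mul h0)
          simpa using this
        exact (Complex.continuous_ofReal.tendsto _).comp hre
      · filter_upwards with n
        simp only [mem_compl_iff, mem_singleton_iff]
        intro hcon
        have := Complex.ofReal_injective hcon
        have hp : (0:ℝ) < ε/4 * (1/(n+1)) := by positivity
        linarith
    apply htend.frequently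
    apply Frequently.of_forall
    intro n
    apply heq
    have hp : (0:ℝ) < ε/4 * (1/(n+1)) := by positivity
    have hp2 : ε/4 * (1/(n+1)) ≤ ε/4 := by
      have h1 : (1 : ℝ)/(n+1) ≤ 1 := by
        rw [div_le_one (by positivity)]
        linarith [Nat.cast_nonneg (α := ℝ) n]
      nlinarith
    constructor <;> [linarith; linarith]
  have hEq := hfa.eqOn_of_preconnected_of_frequently_eq hga hVpre
    (mem_connectedComponentIn hz₀U) hfreq
  intro x hx
  exact hEq (hneg ⟨x, hx, rfl⟩)

lemma diff_Tfun (l : ℝ) (w : ℂ) : DifferentiableAt ℂ (Tfun l) w := by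
  unfold Tfun
  exact (((differentiableAt_const _).mul differentiableAt_fun_id).add
    (differentiableAt_const _)).mul (differentiableAt_fun_id.add (differentiableAt_const _))

lemma global_ID (l : ℝ) (hl : l ∈ Set.Ioo (0:ℝ) 1) (μ G : Measure ℝ)
    [IsProbabilityMeasure μ] [IsFiniteMeasure G]
    (hID : ∃ ε > (0 : ℝ), ∀ x ∈ Set.Ioo (-ε) (0 : ℝ),
      Ht l μ (x : ℂ) = (x : ℂ) * Tfun l (rectC G (Ht l μ (x : ℂ)))) :
    ∀ x : ℝ, x < 0 → Tre l (mre μ x) = Tre l (cre G (hre l μ x)) := by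
  obtain ⟨ε, hε, hID⟩ := hID
  set U : Set ℂ := Om ∩ (Ht l μ) ⁻¹' Om with hU_def
  have hHtDiff : DifferentiableOn ℂ (Ht l μ) Om :=
    fun w hw => (diff_Ht l μ hw).differentiableWithinAt
  have hUopen : IsOpen U :=
    (hHtDiff.continuousOn).isOpen_inter_preimage isOpen_Om isOpen_Om
  have hsub : ∀ x : ℝ, x < 0 → (x:ℂ) ∈ U := by
    intro x hx
    refine ⟨ofReal_neg_mem_Om hx, ?_⟩
    rw [mem_preimage, Ht_real l μ hx]
    exact ofReal_neg_mem_Om (hre_neg l hl μ hx)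
  have hfd : DifferentiableOn ℂ (Ht l μ) U := hHtDiff.mono inter_subset_left
  have hgd : DifferentiableOn ℂ (fun z => z * Tfun l (rectC G (Ht l μ z))) U := by
    intro w hw
    have h1 : DifferentiableAt ℂ (Ht l μ) w := diff_Ht l μ hw.1
    have h2 : DifferentiableAt ℂ (rectC G) (Ht l μ w) := diff_rectC G hw.2
    have h3 : DifferentiableAt ℂ (Tfun l) (rectC G (Ht l μ w)) := diff_Tfun l _
    exact (differentiableAt_fun_id.mul ((h3.comp w (h2.comp w h1)))).differentiableWithinAt
  have hglob := eqOn_neg hUopen hsub hfd hgd hε (fun x hx => hID x hx)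
  intro x hx
  have h := hglob x hx
  rw [Ht_real l μ hx, rectC_real G (hre_neg l hl μ hx), Tfun_real] at h
  have h2 : hre l μ x = x * Tre l (cre G (hre l μ x)) := by exact_mod_cast h
  have h3 : x * Tre l (mre μ x) = x * Tre l (cre G (hre l μ x)) := by
    rw [← h2]; rfl
  exact mul_left_cancel₀ (ne_of_lt hx) h3

lemma global_conv (l : ℝ) (hl : l ∈ Set.Ioo (0:ℝ) 1) (G ν ρ : Measure ℝ)
    [IsFiniteMeasure G] [IsProbabilityMeasure ν] [IsProbabilityMeasure ρ]
    (hconv : ∃ ε > (0 : ℝ), ∀ x ∈ Set.Ioo (-ε) (0 : ℝ),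
      Tfun l (Mt ρ (x : ℂ) - rectC G (Ht l ρ (x : ℂ))) ≠ 0 ∧
      Ht l ρ (x : ℂ) =
        Ht l ν (Ht l ρ (x : ℂ) / Tfun l (Mt ρ (x : ℂ) - rectC G (Ht l ρ (x : ℂ))))) :
    ∀ x : ℝ, x < 0 →
      hre l ρ x = hre l ν (hre l ρ x / Tre l (mre ρ x - cre G (hre l ρ x))) := by
  obtain ⟨ε, hε, hconv⟩ := hconv
  have hHtDiff : DifferentiableOn ℂ (Ht l ρ) Om :=
    fun w hw => (diff_Ht l ρ hw).differentiableWithinAt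
  set Ua : Set ℂ := Om ∩ (Ht l ρ) ⁻¹' Om with hUa_def
  have hUaopen : IsOpen Ua :=
    (hHtDiff.continuousOn).isOpen_inter_preimage isOpen_Om isOpen_Om
  set φ : ℂ → ℂ := fun z => Tfun l (Mt ρ z - rectC G (Ht l ρ z)) with hφ_def
  have hφd : DifferentiableOn ℂ φ Ua := by
    intro w hw
    have h1 : DifferentiableAt ℂ (Ht l ρ) w := diff_Ht l ρ hw.1
    have h2 : DifferentiableAt ℂ (rectC G) (Ht l ρ w) := diff_rectC G hw.2
    have h4 : DifferentiableAt ℂ (fun z => Mt ρ z - rectC G (Ht l ρ z)) w :=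
      (diff_Mt ρ hw.1).sub (h2.comp w h1)
    exact ((diff_Tfun l _).comp w h4).differentiableWithinAt
  set Ub : Set ℂ := Ua ∩ φ ⁻¹' ({(0:ℂ)}ᶜ) with hUb_def
  have hUbopen : IsOpen Ub :=
    (hφd.continuousOn).isOpen_inter_preimage hUaopen isOpen_compl_singleton
  set ψ : ℂ → ℂ := fun z => Ht l ρ z / φ z with hψ_def
  have hψd : DifferentiableOn ℂ ψ Ub := by
    apply DifferentiableOn.div
      ((hHtDiff.mono (fun w hw => hw.1.1)))
      (hφd.mono (fun w hw => hw.1))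
    intro w hw
    exact hw.2
  set U : Set ℂ := Ub ∩ ψ ⁻¹' Om with hU_def
  have hUopen : IsOpen U :=
    (hψd.continuousOn).isOpen_inter_preimage hUbopen isOpen_Om
  have hsub : ∀ x : ℝ, x < 0 → (x:ℂ) ∈ U := by
    intro x hx
    have hρx : hre l ρ x < 0 := hre_neg l hl ρ hx
    have hwgt : -1 < mre ρ x - cre G (hre l ρ x) := by
      have := mre_gt ρ hx
      have := cre_nonpos G hρx
      linarith
    have hTpos : 0 < Tre l (mre ρ x - cre G (hre l ρ x)) := Tre_pos hl hwgt
    have hφx : φ (x:ℂ) = ((Tre l (mre ρ x - cre G (hre l ρ x)) : ℝ) : ℂ) := by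
      rw [hφ_def]
      simp only
      rw [Mt_real ρ hx, Ht_real l ρ hx, rectC_real G hρx, ← Complex.ofReal_sub, Tfun_real]
    have hψx : ψ (x:ℂ) = ((hre l ρ x / Tre l (mre ρ x - cre G (hre l ρ x)) : ℝ) : ℂ) := by
      rw [hψ_def]
      simp only
      rw [Ht_real l ρ hx, hφx, ← Complex.ofReal_div]
    refine ⟨⟨⟨ofReal_neg_mem_Om hx, ?_⟩, ?_⟩, ?_⟩
    · rw [mem_preimage, Ht_real l ρ hx]
      exact ofReal_neg_mem_Om hρx
    · rw [mem_preimage, hφx]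
      simp only [mem_compl_iff, mem_singleton_iff]
      exact_mod_cast hTpos.ne'
    · rw [mem_preimage, hψx]
      exact ofReal_neg_mem_Om (div_neg_of_neg_of_pos hρx hTpos)
  have hfd : DifferentiableOn ℂ (Ht l ρ) U :=
    hHtDiff.mono (fun w hw => hw.1.1.1)
  have hgd : DifferentiableOn ℂ (fun z => Ht l ν (ψ z)) U := by
    intro w hw
    exact (diff_Ht l ν hw.2).comp_differentiableWithinAt w
      ((hψd w hw.1).mono (fun y hy => hy.1))
  have hglob := eqOn_neg hUopen hsub hfd hgd hε (fun x hx => (hconv x hx).2)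
  intro x hx
  have hρx : hre l ρ x < 0 := hre_neg l hl ρ hx
  have hwgt : -1 < mre ρ x - cre G (hre l ρ x) := by
    have := mre_gt ρ hx
    have := cre_nonpos G hρx
    linarith
  have hTpos : 0 < Tre l (mre ρ x - cre G (hre l ρ x)) := Tre_pos hl hwgt
  have hux : hre l ρ x / Tre l (mre ρ x - cre G (hre l ρ x)) < 0 :=
    div_neg_of_neg_of_pos hρx hTpos
  have h := hglob x hx
  simp only [hψ_def, hφ_def] at h
  rw [Mt_real ρ hx, Ht_real l ρ hx, rectC_real G hρx, ← Complex.ofReal_sub, Tfun_real,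
    ← Complex.ofReal_div, Ht_real l ν hux] at h
  exact_mod_cast h

/-- the real argument passed to `H_ν` -/
def uu (l : ℝ) (G ρ : Measure ℝ) (x : ℝ) : ℝ :=
  hre l ρ x / Tre l (mre ρ x - cre G (hre l ρ x))

end S19

open S19

/-- If `μ` is `⊞_λ`-infinitely divisible and `ρ = μ ⊞_λ ν` has an atom
at the origin, then `μ({0}) + ν({0}) > 1` and `ρ({0}) = μ({0}) + ν({0}) - 1`. -/
theorem stmt19 (l : ℝ) (hl : l ∈ Set.Ioo (0 : ℝ) 1)
    (μ : Measure ℝ) [IsProbabilityMeasure μ]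
    (hμsym : Measure.map (fun t : ℝ => -t) μ = μ)
    (G : Measure ℝ) [IsFiniteMeasure G]
    (hGsym : Measure.map (fun t : ℝ => -t) G = G)
    (hID : IsRectInfDiv l μ G)
    (ν ρ : Measure ℝ) [IsProbabilityMeasure ν] [IsProbabilityMeasure ρ]
    (hνsym : Measure.map (fun t : ℝ => -t) ν = ν)
    (hρsym : Measure.map (fun t : ℝ => -t) ρ = ρ)
    (hconv : IsRectConv l G ν ρ)
    (hatom : 0 < ρ ({0} : Set ℝ)) :
    1 < μ ({0} : Set ℝ) + ν ({0} : Set ℝ) ∧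
    ρ ({0} : Set ℝ) + 1 = μ ({0} : Set ℝ) + ν ({0} : Set ℝ) := by
  set a := (μ ({0} : Set ℝ)).toReal with ha_def
  set b := (ν ({0} : Set ℝ)).toReal with hb_def
  set c := (ρ ({0} : Set ℝ)).toReal with hc_def
  have hc0 : 0 < c := ENNReal.toReal_pos hatom.ne' (measure_ne_top ρ _)
  have ha1 : a ≤ 1 := by
    have h := ENNReal.toReal_mono ENNReal.one_ne_top (prob_le_one (μ := μ) (s := {0}))
    simpa using h
  have hb1 : b ≤ 1 := by
    have h := ENNReal.toReal_mono ENNReal.one_ne_top (prob_le_one (μ := ν) (s := {0}))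
    simpa using h
  have hc1 : c ≤ 1 := by
    have h := ENNReal.toReal_mono ENNReal.one_ne_top (prob_le_one (μ := ρ) (s := {0}))
    simpa using h
  have hE1 := global_ID l hl μ G hID
  have hE2 := global_conv l hl G ν ρ hconv
  have hmρ : Tendsto (fun x => mre ρ x) atBot (𝓝 (c - 1)) := mre_tendsto ρ
  have hmμ : Tendsto (fun x => mre μ x) atBot (𝓝 (a - 1)) := mre_tendsto μ
  have hmν : Tendsto (fun x => mre ν x) atBot (𝓝 (b - 1)) := mre_tendsto ν
  have hhρ : Tendsto (hre l ρ) atBot atBot := hre_atBot l hl ρ hc0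
  -- pointwise key identity from the convolution equation
  have hkey : ∀ x : ℝ, x < 0 →
      mre ρ x - cre G (hre l ρ x) = mre ν (uu l G ρ x) := by
    intro x hx
    have hρx : hre l ρ x < 0 := hre_neg l hl ρ hx
    have hw : -1 < mre ρ x - cre G (hre l ρ x) := by
      have h1 := mre_gt ρ hx
      have h2 := cre_nonpos G hρx
      linarith
    have hT : 0 < Tre l (mre ρ x - cre G (hre l ρ x)) := Tre_pos hl hw
    have hux : uu l G ρ x < 0 := div_neg_of_neg_of_pos hρx hT
    have h2 : hre l ρ x
        = hre l ρ x / Tre l (mre ρ x - cre G (hre l ρ x)) * Tre l (mre ν (uu l G ρ x)) :=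
      hE2 x hx
    field_simp [hT.ne'] at h2
    rcases mul_eq_mul_left_iff.1 h2 with h2 | h2
    · exact Tre_inj hl hw (mre_gt ν hux) (by linarith)
    · exact absurd h2 hρx.ne
  -- lower bound for cre from the ρ-side
  have hF1 : ∀ y : ℝ, y < 0 → c - 1 ≤ cre G y := by
    intro y hy
    apply le_of_tendsto hmρ
    filter_upwards [hhρ.eventually (eventually_le_atBot y), eventually_lt_atBot (0:ℝ)]
      with x h1 h2
    have hρx : hre l ρ x < 0 := hre_neg l hl ρ h2
    have hw : -1 < mre ρ x - cre G (hre l ρ x) := by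
      have := mre_gt ρ h2; have := cre_nonpos G hρx; linarith
    have hT : 0 < Tre l (mre ρ x - cre G (hre l ρ x)) := Tre_pos hl hw
    have hux : uu l G ρ x < 0 := div_neg_of_neg_of_pos hρx hT
    have h3 : mre ρ x ≤ cre G (hre l ρ x) := by
      have hk := hkey x h2
      have := mre_nonpos ν hux
      linarith
    exact le_trans h3 (cre_mono G h1 hy)
  -- the infinitely-divisible equation in exact form
  have hE1' : ∀ x : ℝ, x < 0 → mre μ x = cre G (hre l μ x) := by
    intro x hx
    have hμx : hre l μ x < 0 := hre_neg l hl μ hx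
    have hgt : -1 < cre G (hre l μ x) := by
      have := hF1 _ hμx; linarith
    exact Tre_inj hl (mre_gt μ hx) hgt (hE1 x hx)
  have hac : c ≤ a := by
    have hev : ∀ᶠ x in (atBot : Filter ℝ), c - 1 ≤ mre μ x := by
      filter_upwards [eventually_lt_atBot (0:ℝ)] with x hx
      rw [hE1' x hx]
      exact hF1 _ (hre_neg l hl μ hx)
    have := ge_of_tendsto hmμ hev
    linarith
  have ha0 : 0 < a := lt_of_lt_of_le hc0 hac
  have hhμ : Tendsto (hre l μ) atBot atBot := hre_atBot l hl μ ha0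
  have hcμ : Tendsto (fun x => cre G (hre l μ x)) atBot (𝓝 (a - 1)) := by
    apply Tendsto.congr' _ hmμ
    filter_upwards [eventually_lt_atBot (0:ℝ)] with x hx
    exact hE1' x hx
  have hF2 : ∀ y : ℝ, y < 0 → a - 1 ≤ cre G y := by
    intro y hy
    apply le_of_tendsto hcμ
    filter_upwards [hhμ.eventually (eventually_le_atBot y), eventually_lt_atBot (0:ℝ)]
      with x h1 h2
    exact cre_mono G h1 hy
  -- squeeze: cre ∘ hre ρ also tends to a - 1
  have hcρ : Tendsto (fun x => cre G (hre l ρ x)) atBot (𝓝 (a - 1)) := by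
    rw [tendsto_order]
    constructor
    · intro q hq
      filter_upwards [eventually_lt_atBot (0:ℝ)] with x hx
      exact lt_of_lt_of_le hq (hF2 _ (hre_neg l hl ρ hx))
    · intro q hq
      have hev : ∀ᶠ x in (atBot : Filter ℝ), cre G (hre l μ x) < q ∧ x < 0 :=
        (hcμ.eventually_lt_const hq).and (eventually_lt_atBot 0)
      obtain ⟨x₀, hx₀q, hx₀0⟩ := hev.exists
      filter_upwards [hhρ.eventually (eventually_le_atBot (hre l μ x₀)),
        eventually_lt_atBot (0:ℝ)] with x h1 h2
      exact lt_of_le_of_lt (cre_mono G h1 (hre_neg l hl μ hx₀0)) hx₀q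
  have hwlim : Tendsto (fun x => mre ρ x - cre G (hre l ρ x)) atBot (𝓝 (c - a)) := by
    have h := hmρ.sub hcρ
    have : c - 1 - (a - 1) = c - a := by ring
    rwa [this] at h
  have hTlim : Tendsto (fun x => Tre l (mre ρ x - cre G (hre l ρ x))) atBot
      (𝓝 (Tre l (c - a))) := ((continuous_Tre l).tendsto _).comp hwlim
  have hTpos : 0 < Tre l (c - a) := Tre_pos hl (by linarith)
  have hulim : Tendsto (uu l G ρ) atBot atBot := by
    have hinv : Tendsto (fun x => (Tre l (mre ρ x - cre G (hre l ρ x)))⁻¹) atBot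
        (𝓝 (Tre l (c - a))⁻¹) := hTlim.inv₀ hTpos.ne'
    have h := Filter.Tendsto.atBot_mul_pos (inv_pos.2 hTpos) hhρ hinv
    have heq : (fun x => hre l ρ x * (Tre l (mre ρ x - cre G (hre l ρ x)))⁻¹) = uu l G ρ := by
      funext x
      rw [uu, div_eq_mul_inv]
    rwa [heq] at h
  have hnulim : Tendsto (fun x => mre ν (uu l G ρ x)) atBot (𝓝 (b - 1)) := hmν.comp hulim
  have hwlim2 : Tendsto (fun x => mre ν (uu l G ρ x)) atBot (𝓝 (c - a)) := by
    apply Tendsto.congr' _ hwlim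
    filter_upwards [eventually_lt_atBot (0:ℝ)] with x hx
    exact hkey x hx
  have hfinal : c - a = b - 1 := tendsto_nhds_unique hwlim2 hnulim
  have hr1 : (1:ℝ) < a + b := by linarith
  have hr2 : c + 1 = a + b := by linarith
  have hne : μ ({0} : Set ℝ) + ν ({0} : Set ℝ) ≠ ⊤ :=
    ENNReal.add_ne_top.2 ⟨measure_ne_top _ _, measure_ne_top _ _⟩
  have hne2 : ρ ({0} : Set ℝ) + 1 ≠ ⊤ :=
    ENNReal.add_ne_top.2 ⟨measure_ne_top _ _, ENNReal.one_ne_top⟩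
  have hsum : (μ ({0} : Set ℝ) + ν ({0} : Set ℝ)).toReal = a + b :=
    ENNReal.toReal_add (measure_ne_top _ _) (measure_ne_top _ _)
  have hsum2 : (ρ ({0} : Set ℝ) + 1).toReal = c + 1 := by
    rw [ENNReal.toReal_add (measure_ne_top _ _) ENNReal.one_ne_top, ENNReal.toReal_one]
  constructor
  · rw [← ENNReal.ofReal_toReal hne, hsum, ENNReal.lt_ofReal_iff_toReal_lt ENNReal.one_ne_top,
      ENNReal.toReal_one]
    exact hr1
  · rw [← ENNReal.ofReal_toReal hne, ← ENNReal.ofReal_toReal hne2, hsum, hsum2, hr2]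


end
end
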